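/- arXiv:1808.01156 — 3 statements merged into one kernel-verified Lean document; each statement's English description precedes it below -/
import Mathlib

section
/- If a d-dimensional copula C is symmetric (invariant under all coordinate permutations) and satisfies [C,C] = 0 (i.e., C minimizes Kendall's tau), then its order transform satisfies [C_T, C_T] = 0. More precisely, [C_T, C_T] ≤ d! · [C, C] for every symmetric copula C. -/
open MeasureTheory

/-- A copula measure: a probability measure on `[0,1]^d` (viewed inside
`Fin d → ℝ`) all of whose univariate marginals are uniform on `[0,1]`. -/
def IsCopulaMeasure {d : ℕ} (μ : Measure (Fin d → ℝ)) : Prop :=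
  IsProbabilityMeasure μ ∧
    ∀ i : Fin d, μ.map (fun x => x i) = volume.restrict (Set.Icc 0 1)

/-- The copula (distribution function) associated with a copula measure. -/
noncomputable def copulaFn {d : ℕ} (μ : Measure (Fin d → ℝ)) (u : Fin d → ℝ) : ℝ :=
  (μ {x | ∀ i, x i ≤ u i}).toReal

/-- The sorting (order statistic) map: `sortVec x` is the nondecreasing
rearrangement of the vector `x`. -/
noncomputable def sortVec {d : ℕ} (x : Fin d → ℝ) : Fin d → ℝ :=
  x ∘ Tuple.sort x

/-- The `i`-th univariate marginal distribution function of a measure on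
`Fin d → ℝ`. -/
noncomputable def margCDF {d : ℕ} (ρ : Measure (Fin d → ℝ)) (i : Fin d) (t : ℝ) : ℝ :=
  (ρ.map (fun x => x i) (Set.Iic t)).toReal

/-- `ν` is the copula measure of the order transform `C_T` of the copula
with copula measure `μ`: Sklar's identity `H^C_T = C_T ∘ (marginals of H^C_T)`
holds, where `H^C_T` is the distribution function of the image of `μ` under
the sorting map. -/
def IsOrderTransform {d : ℕ} (μ ν : Measure (Fin d → ℝ)) : Prop :=
  IsCopulaMeasure ν ∧
    ∀ x : Fin d → ℝ,
      ((μ.map sortVec) {y | ∀ i, y i ≤ x i}).toReal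
        = copulaFn ν (fun i => margCDF (μ.map sortVec) i (x i))

namespace Scratch

open Set Filter Topology
open scoped ENNReal


variable {d : ℕ}

lemma box_eq_Iic (u : Fin d → ℝ) : {x : Fin d → ℝ | ∀ i, x i ≤ u i} = Set.Iic u := by
  ext x; simp [Pi.le_def]

lemma measurableSet_box (u : Fin d → ℝ) :
    MeasurableSet {x : Fin d → ℝ | ∀ i, x i ≤ u i} := by
  rw [box_eq_Iic]; exact measurableSet_Iic

/-- measurability of the multivariate CDF -/
lemma measurable_boxCDF (ρ : Measure (Fin d → ℝ)) [IsFiniteMeasure ρ] :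
    Measurable (fun x : Fin d → ℝ => ρ {y | ∀ i, y i ≤ x i}) := by
  have key : ∀ x : Fin d → ℝ, ρ {y | ∀ i, y i ≤ x i}
      = ⨅ (q : Fin d → ℚ), ⨅ (_ : ∀ i, x i ≤ (q i : ℝ)), ρ {y | ∀ i, y i ≤ (q i : ℝ)} := by
    intro x
    refine le_antisymm (le_iInf fun q => le_iInf fun hq =>
      measure_mono (fun y hy i => (hy i).trans (hq i))) ?_
    set S := {q : Fin d → ℚ | ∀ i, x i ≤ (q i : ℝ)} with hS
    have hne : S.Nonempty := ⟨fun i => (⌈x i⌉ : ℚ), fun i => by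
      push_cast; exact Int.le_ceil (x i)⟩
    have hinter : (⋂ (q : S), {y : Fin d → ℝ | ∀ i, y i ≤ ((q : Fin d → ℚ) i : ℝ)})
        = {y | ∀ i, y i ≤ x i} := by
      ext y
      simp only [mem_iInter, mem_setOf_eq]
      constructor
      · intro hy i
        by_contra hlt
        push_neg at hlt
        obtain ⟨r, hr1, hr2⟩ := exists_rat_btwn hlt
        set q : Fin d → ℚ := fun j => if j = i then r else (⌈x j⌉ : ℚ) with hq
        have hqS : q ∈ S := by
          intro j
          by_cases h : j = i
          · subst h; simp [hq, hr1.le]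
          · simp only [hq, if_neg h]; push_cast; exact Int.le_ceil (x j)
        have := hy ⟨q, hqS⟩ i
        simp [hq] at this
        exact absurd (this.trans_lt hr2) (lt_irrefl _)
      · intro hy q i
        exact (hy i).trans (q.2 i)
    have hdir : Directed (· ⊇ ·) (fun q : S => {y : Fin d → ℝ | ∀ i, y i ≤ ((q : Fin d → ℚ) i : ℝ)}) := by
      rintro ⟨q₁, hq₁⟩ ⟨q₂, hq₂⟩
      refine ⟨⟨fun i => min (q₁ i) (q₂ i), fun i => by push_cast; exact le_min (hq₁ i) (hq₂ i)⟩, ?_, ?_⟩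
      · intro y hy i
        exact (hy i).trans (by push_cast; exact min_le_left _ _)
      · intro y hy i
        exact (hy i).trans (by push_cast; exact min_le_right _ _)
    have := Directed.measure_iInter (μ := ρ)
      (s := fun q : S => {y : Fin d → ℝ | ∀ i, y i ≤ ((q : Fin d → ℚ) i : ℝ)})
      (fun q => (measurableSet_box _).nullMeasurableSet) hdir
      ⟨⟨hne.choose, hne.choose_spec⟩, measure_ne_top ρ _⟩
    rw [hinter] at this
    rw [this]
    rw [iInf_subtype']
    rfl
  rw [show (fun x : Fin d → ℝ => ρ {y | ∀ i, y i ≤ x i}) = fun x =>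
      ⨅ (q : Fin d → ℚ), ⨅ (_ : ∀ i, x i ≤ (q i : ℝ)), ρ {y | ∀ i, y i ≤ (q i : ℝ)} from funext key]
  refine Measurable.iInf (fun q => ?_)
  have h2 : (fun x : Fin d → ℝ => ⨅ (_ : ∀ i, x i ≤ (q i : ℝ)), ρ {y | ∀ i, y i ≤ (q i : ℝ)})
      = fun x => if ∀ i, x i ≤ (q i : ℝ) then ρ {y | ∀ i, y i ≤ (q i : ℝ)} else ⊤ := by
    funext x; by_cases h : ∀ i, x i ≤ (q i : ℝ)
    · rw [if_pos h, iInf_pos h]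
    · rw [if_neg h, iInf_neg h]
  rw [h2]
  exact Measurable.ite (measurableSet_box _) measurable_const measurable_const


lemma sortVec_apply (x : Fin d → ℝ) (i : Fin d) : sortVec x i = x (Tuple.sort x i) := rfl

lemma monotone_sortVec (x : Fin d → ℝ) : Monotone (sortVec x) := Tuple.monotone_sort x

lemma sortVec_le_iff (x : Fin d → ℝ) (i : Fin d) (t : ℝ) :
    sortVec x i ≤ t ↔ (i : ℕ) < (Finset.univ.filter (fun j => x j ≤ t)).card := by
  have hcard : (Finset.univ.filter (fun j => x j ≤ t)).card
      = (Finset.univ.filter (fun k => sortVec x k ≤ t)).card := by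
    refine (Finset.card_bij (fun k _ => Tuple.sort x k) ?_ ?_ ?_).symm
    · intro k hk
      simp only [Finset.mem_filter, Finset.mem_univ, true_and] at hk ⊢
      exact hk
    · intro a ha b hb hab
      exact (Tuple.sort x).injective hab
    · intro j hj
      refine ⟨(Tuple.sort x).symm j, ?_, by simp⟩
      simp only [Finset.mem_filter, Finset.mem_univ, true_and] at hj ⊢
      simpa [sortVec_apply] using hj
  rw [hcard]
  constructor
  · intro h
    have hsub : Finset.Iic i ⊆ Finset.univ.filter (fun k => sortVec x k ≤ t) := by
      intro k hk
      simp only [Finset.mem_Iic] at hk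
      simp only [Finset.mem_filter, Finset.mem_univ, true_and]
      exact (monotone_sortVec x hk).trans h
    have := Finset.card_le_card hsub
    rw [Fin.card_Iic] at this
    omega
  · intro h
    by_contra hlt
    push_neg at hlt
    have hsub : Finset.univ.filter (fun k => sortVec x k ≤ t) ⊆ Finset.Iio i := by
      intro k hk
      simp only [Finset.mem_filter, Finset.mem_univ, true_and] at hk
      simp only [Finset.mem_Iio]
      by_contra hik
      push_neg at hik
      exact absurd ((monotone_sortVec x hik).trans hk) (not_le.2 hlt)
    have := Finset.card_le_card hsub
    rw [Fin.card_Iio] at this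
    omega

lemma measurable_sortVec : Measurable (sortVec (d := d)) := by
  apply measurable_pi_lambda
  intro i
  apply measurable_of_Iic
  intro t
  have hset : (fun x : Fin d → ℝ => sortVec x i) ⁻¹' (Set.Iic t)
      = (fun x : Fin d → ℝ => (Finset.univ.filter (fun j => x j ≤ t)).card) ⁻¹' {n | (i:ℕ) < n} := by
    ext x
    simp [Set.mem_preimage, sortVec_le_iff]
  rw [hset]
  have hmeas : Measurable (fun x : Fin d → ℝ => (Finset.univ.filter (fun j => x j ≤ t)).card) := by
    simp_rw [Finset.card_filter]
    apply Finset.measurable_sum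
    intro j _
    exact Measurable.ite ((measurable_pi_apply j) measurableSet_Iic) measurable_const
      measurable_const
  exact hmeas trivial

lemma exists_perm_of_sortVec_le {z y : Fin d → ℝ} (h : ∀ i, sortVec z i ≤ sortVec y i) :
    ∃ π : Equiv.Perm (Fin d), ∀ i, z i ≤ y (π i) := by
  refine ⟨Tuple.sort y * (Tuple.sort z)⁻¹, fun i => ?_⟩
  have h1 : z i = sortVec z ((Tuple.sort z)⁻¹ i) := by
    rw [sortVec_apply]
    simp
  rw [h1]
  exact h _

variable (ρ : Measure ℝ) [IsProbabilityMeasure ρ]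

noncomputable def cdf1 (t : ℝ) : ℝ := (ρ (Iic t)).toReal

lemma cdf1_mono : Monotone (cdf1 ρ) := fun a b hab =>
  ENNReal.toReal_mono (measure_ne_top ρ _) (measure_mono (Iic_subset_Iic.2 hab))

lemma cdf1_nonneg (t : ℝ) : 0 ≤ cdf1 ρ t := ENNReal.toReal_nonneg

lemma cdf1_le_one (t : ℝ) : cdf1 ρ t ≤ 1 := by
  rw [cdf1, show (1:ℝ) = (ρ univ).toReal by simp]
  exact ENNReal.toReal_mono (measure_ne_top ρ _) (measure_mono (subset_univ _))

lemma tendsto_cdf1_atTop : Tendsto (cdf1 ρ) atTop (𝓝 1) := by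
  have h := tendsto_measure_Iic_atTop (μ := ρ)
  rw [measure_univ] at h
  have h2 := (ENNReal.tendsto_toReal ENNReal.one_ne_top).comp h
  exact (by simpa [Function.comp_def] using h2 : Tendsto (fun t => (ρ (Iic t)).toReal) atTop (𝓝 1))

lemma exists_cdf1_lt {u : ℝ} (hu : 0 < u) : ∃ a, cdf1 ρ a < u := by
  have hinter : (⋂ n : ℕ, Iic (-(n:ℝ))) = (∅ : Set ℝ) := by
    ext s
    simp only [mem_iInter, mem_Iic, mem_empty_iff_false, iff_false, not_forall, not_le]
    obtain ⟨n, hn⟩ := exists_nat_gt (-s)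
    exact ⟨n, by linarith⟩
  have hanti : Antitone (fun n : ℕ => Iic (-(n:ℝ))) := by
    intro m n hmn
    apply Iic_subset_Iic.2
    simp only [neg_le_neg_iff]
    exact_mod_cast hmn
  have h1 : Tendsto (fun n : ℕ => ρ (Iic (-(n:ℝ)))) atTop (𝓝 0) := by
    have := tendsto_measure_iInter_atTop (μ := ρ)
      (fun n : ℕ => measurableSet_Iic.nullMeasurableSet) hanti ⟨0, measure_ne_top ρ _⟩
    rw [hinter] at this
    simpa [Function.comp_def] using this
  have h2 : Tendsto (fun n : ℕ => cdf1 ρ (-(n:ℝ))) atTop (𝓝 0) := by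
    have := (ENNReal.tendsto_toReal (by simp : (0:ENNReal) ≠ ⊤)).comp h1
    simpa [cdf1, Function.comp_def] using this
  obtain ⟨n, hn⟩ := (h2.eventually (eventually_lt_nhds hu)).exists
  exact ⟨-(n:ℝ), hn⟩

lemma measure_Iio_eq (hatom : ∀ t : ℝ, ρ {t} = 0) (a : ℝ) : ρ (Iio a) = ρ (Iic a) :=
  measure_congr (Iio_ae_eq_Iic' (hatom a))

lemma continuous_cdf1 (hatom : ∀ t : ℝ, ρ {t} = 0) : Continuous (cdf1 ρ) := by
  rw [continuous_iff_continuousAt]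
  intro a
  rw [ContinuousAt]
  apply tendsto_order.2
  constructor
  · intro l hl
    -- approximate from the left
    have hun : Iio a = ⋃ n : ℕ, Iic (a - 1/(n+1)) := by
      ext s
      simp only [mem_Iio, mem_iUnion, mem_Iic]
      constructor
      · intro hs
        obtain ⟨n, hn⟩ := exists_nat_gt (1/(a - s))
        refine ⟨n, ?_⟩
        rw [div_lt_iff₀ (by linarith)] at hn
        have hn1 : 1/((n:ℝ)+1) < a - s := by
          rw [div_lt_iff₀ (by positivity)]
          nlinarith
        linarith
      · rintro ⟨n, hn⟩
        have : (0:ℝ) < 1/((n:ℝ)+1) := by positivity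
        linarith
    have hmono : Monotone (fun n : ℕ => Iic (a - 1/((n:ℝ)+1))) := by
      intro m n hmn
      apply Iic_subset_Iic.2
      have : 1/((n:ℝ)+1) ≤ 1/((m:ℝ)+1) := by
        apply one_div_le_one_div_of_le (by positivity)
        exact_mod_cast by omega
      linarith
    have h1 : Tendsto (fun n : ℕ => ρ (Iic (a - 1/((n:ℝ)+1)))) atTop (𝓝 (ρ (Iio a))) := by
      rw [hun]
      exact tendsto_measure_iUnion_atTop hmono
    rw [measure_Iio_eq ρ hatom] at h1
    have h2 : Tendsto (fun n : ℕ => cdf1 ρ (a - 1/((n:ℝ)+1))) atTop (𝓝 (cdf1 ρ a)) :=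
      (ENNReal.tendsto_toReal (measure_ne_top ρ _)).comp h1
    have h3 : ∀ᶠ n : ℕ in atTop, l < cdf1 ρ (a - 1/((n:ℝ)+1)) :=
      h2.eventually (eventually_gt_nhds hl)
    obtain ⟨n, hn⟩ := h3.exists
    have hopen : Ioi (a - 1/((n:ℝ)+1)) ∈ 𝓝 a := by
      apply Ioi_mem_nhds
      have : (0:ℝ) < 1/((n:ℝ)+1) := by positivity
      linarith
    filter_upwards [hopen] with s hs
    exact hn.trans_le (cdf1_mono ρ (le_of_lt hs))
  · intro u hu
    have hint : Iic a = ⋂ n : ℕ, Iic (a + 1/((n:ℝ)+1)) := by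
      ext s
      simp only [mem_Iic, mem_iInter]
      constructor
      · intro hs n
        have : (0:ℝ) < 1/((n:ℝ)+1) := by positivity
        linarith
      · intro hs
        by_contra hlt
        push_neg at hlt
        obtain ⟨n, hn⟩ := exists_nat_gt (1/(s - a))
        have hn1 : 1/((n:ℝ)+1) < s - a := by
          rw [div_lt_iff₀ (by positivity)]
          rw [div_lt_iff₀ (by linarith)] at hn
          nlinarith
        have := hs n
        linarith
    have hanti : Antitone (fun n : ℕ => Iic (a + 1/((n:ℝ)+1))) := by
      intro m n hmn
      apply Iic_subset_Iic.2
      have : 1/((n:ℝ)+1) ≤ 1/((m:ℝ)+1) := by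
        apply one_div_le_one_div_of_le (by positivity)
        exact_mod_cast by omega
      linarith
    have h1 : Tendsto (fun n : ℕ => ρ (Iic (a + 1/((n:ℝ)+1)))) atTop (𝓝 (ρ (Iic a))) := by
      rw [hint]
      exact tendsto_measure_iInter_atTop (fun n => measurableSet_Iic.nullMeasurableSet) hanti
        ⟨0, measure_ne_top ρ _⟩
    have h2 : Tendsto (fun n : ℕ => cdf1 ρ (a + 1/((n:ℝ)+1))) atTop (𝓝 (cdf1 ρ a)) :=
      (ENNReal.tendsto_toReal (measure_ne_top ρ _)).comp h1
    have h3 : ∀ᶠ n : ℕ in atTop, cdf1 ρ (a + 1/((n:ℝ)+1)) < u :=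
      h2.eventually (eventually_lt_nhds hu)
    obtain ⟨n, hn⟩ := h3.exists
    have hopen : Iio (a + 1/((n:ℝ)+1)) ∈ 𝓝 a := by
      apply Iio_mem_nhds
      have : (0:ℝ) < 1/((n:ℝ)+1) := by positivity
      linarith
    filter_upwards [hopen] with s hs
    exact lt_of_le_of_lt (cdf1_mono ρ (le_of_lt hs)) hn

lemma exists_cdf1_eq (hatom : ∀ t : ℝ, ρ {t} = 0) {u : ℝ} (hu0 : 0 < u) (hu1 : u < 1) :
    ∃ t, cdf1 ρ t = u := by
  obtain ⟨a, ha⟩ := exists_cdf1_lt ρ hu0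
  obtain ⟨b, hb⟩ := ((tendsto_cdf1_atTop ρ).eventually (eventually_gt_nhds hu1)).exists
  have hab : a ≤ b := by
    by_contra h
    push_neg at h
    have := cdf1_mono ρ h.le
    linarith
  obtain ⟨t, _, ht⟩ := intermediate_value_Icc hab (continuous_cdf1 ρ hatom).continuousOn
    ⟨ha.le, hb.le⟩
  exact ⟨t, ht⟩

lemma cdf1_flat_null (hatom : ∀ t : ℝ, ρ {t} = 0) (t : ℝ) (ht : cdf1 ρ t < 1) :
    ρ {s | t < s ∧ cdf1 ρ s ≤ cdf1 ρ t} = 0 := by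
  set S := {s | t < s ∧ cdf1 ρ s ≤ cdf1 ρ t} with hS
  rcases S.eq_empty_or_nonempty with h | hne
  · simp [h]
  obtain ⟨b, hb⟩ := ((tendsto_cdf1_atTop ρ).eventually (eventually_gt_nhds ht)).exists
  have hbdd : BddAbove S := by
    refine ⟨b, fun s hs => ?_⟩
    by_contra h
    push_neg at h
    have h1 := cdf1_mono ρ h.le
    have h2 := hs.2
    linarith
  set c := sSup S with hc
  obtain ⟨w, hwmono, hwt, hwS⟩ := exists_seq_tendsto_sSup hne hbdd
  have hFc : cdf1 ρ c ≤ cdf1 ρ t := by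
    have h1 : Tendsto (fun n => cdf1 ρ (w n)) atTop (𝓝 (cdf1 ρ c)) :=
      ((continuous_cdf1 ρ hatom).continuousAt.tendsto).comp hwt
    exact le_of_tendsto h1 (Eventually.of_forall fun n => (hwS n).2)
  have htc : t < c := lt_of_lt_of_le (hwS 0).1 (le_csSup hbdd (hwS 0))
  have hsub : S ⊆ Ioc t c := fun s hs => ⟨hs.1, le_csSup hbdd hs⟩
  have hcc : ρ (Iic c) = ρ (Iic t) := by
    have hle := cdf1_mono ρ htc.le
    have : cdf1 ρ c = cdf1 ρ t := le_antisymm hFc hle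
    rw [cdf1, cdf1] at this
    exact (ENNReal.toReal_eq_toReal_iff' (measure_ne_top ρ _) (measure_ne_top ρ _)).1 this
  have hIoc : ρ (Ioc t c) = 0 := by
    rw [← Iic_sdiff_Iic, measure_diff (Iic_subset_Iic.2 htc.le)
      measurableSet_Iic.nullMeasurableSet (measure_ne_top ρ _), hcc, tsub_self]
  exact measure_mono_null hsub hIoc


end Scratch

namespace NuEq

open Set Filter Topology
open scoped ENNReal
open Scratch MeasurableSpace

variable {d : ℕ}

lemma ratpick (a b : ℝ) (hab : a < b) :
    ∃ q : ℚ, a < (q:ℝ) ∧ (q:ℝ) < b ∧ (q:ℝ) ≠ 0 ∧ (q:ℝ) ≠ 1 := by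
  obtain ⟨q1, hq1a, hq1b⟩ := exists_rat_btwn hab
  obtain ⟨q2, hq2a, hq2b⟩ := exists_rat_btwn hq1a
  obtain ⟨q3, hq3a, hq3b⟩ := exists_rat_btwn hq2a
  by_cases h1 : (q1:ℝ) ≠ 0 ∧ (q1:ℝ) ≠ 1
  · exact ⟨q1, hq1a, hq1b, h1.1, h1.2⟩
  by_cases h2 : (q2:ℝ) ≠ 0 ∧ (q2:ℝ) ≠ 1
  · exact ⟨q2, hq2a, hq2b.trans hq1b, h2.1, h2.2⟩
  push_neg at h1 h2
  have hq1' : (q1:ℝ) = 0 ∨ (q1:ℝ) = 1 := by tauto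
  have hq2' : (q2:ℝ) = 0 ∨ (q2:ℝ) = 1 := by tauto
  have hq3neg : (q3:ℝ) < 0 := by
    rcases hq1' with h | h <;> rcases hq2' with h' | h' <;> linarith
  exact ⟨q3, hq3a, by linarith, by linarith, by linarith⟩

lemma nu_eq_map (hd : 0 < d)
    (H ν : Measure (Fin d → ℝ)) [IsProbabilityMeasure H] [IsProbabilityMeasure ν]
    (hHatom : ∀ (i : Fin d) (t : ℝ), H {x | x i = t} = 0)
    (hνmarg : ∀ i : Fin d, ν.map (fun x => x i) = volume.restrict (Set.Icc 0 1))
    (hsklar : ∀ x : Fin d → ℝ, H {y | ∀ i, y i ≤ x i}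
        = ν {v | ∀ i, v i ≤ ((H.map (fun z => z i)) (Iic (x i))).toReal}) :
    ν = H.map (fun x i => ((H.map (fun z => z i)) (Iic (x i))).toReal) := by
  classical
  have hproj : ∀ i : Fin d, Measurable (fun z : Fin d → ℝ => z i) := fun i => measurable_pi_apply i
  set ρ : Fin d → Measure ℝ := fun i => H.map (fun z => z i) with hρ
  have hρprob : ∀ i, IsProbabilityMeasure (ρ i) := fun i =>
    Measure.isProbabilityMeasure_map (hproj i).aemeasurable
  have hρatom : ∀ i (t : ℝ), ρ i {t} = 0 := by
    intro i t
    rw [hρ, Measure.map_apply (hproj i) (measurableSet_singleton t)]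
    exact hHatom i t
  set F : Fin d → ℝ → ℝ := fun i => cdf1 (ρ i) with hF
  have hFmono : ∀ i, Monotone (F i) := fun i => cdf1_mono (ρ i)
  have hFcont : ∀ i, Continuous (F i) := fun i => continuous_cdf1 (ρ i) (hρatom i)
  have hFmeas : ∀ i, Measurable (F i) := fun i => (hFmono i).measurable
  have hF01 : ∀ i t, 0 ≤ F i t ∧ F i t ≤ 1 := fun i t =>
    ⟨cdf1_nonneg (ρ i) t, @cdf1_le_one (ρ i) (hρprob i) t⟩
  set T : (Fin d → ℝ) → (Fin d → ℝ) := fun x i => F i (x i) with hT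
  have hTmeas : Measurable T :=
    measurable_pi_lambda _ (fun i => (hFmeas i).comp (hproj i))
  -- Sklar restated
  have hsklar' : ∀ x : Fin d → ℝ, H {y | ∀ i, y i ≤ x i} = ν {v | ∀ i, v i ≤ F i (x i)} := by
    intro x
    exact hsklar x
  -- marginal facts for ν
  have hνle : ∀ (i : Fin d) (c : ℝ), ν {v | v i ≤ c} = volume (Iic c ∩ Icc (0:ℝ) 1) := by
    intro i c
    have : {v : Fin d → ℝ | v i ≤ c} = (fun v : Fin d → ℝ => v i) ⁻¹' (Iic c) := rfl
    rw [this, ← Measure.map_apply (hproj i) measurableSet_Iic, hνmarg i,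
      Measure.restrict_apply measurableSet_Iic]
  have hνge : ∀ i : Fin d, ν {v | 1 ≤ v i} = 0 := by
    intro i
    have h1 : {v : Fin d → ℝ | 1 ≤ v i} = (fun v : Fin d → ℝ => v i) ⁻¹' (Ici 1) := rfl
    rw [h1, ← Measure.map_apply (hproj i) measurableSet_Ici, hνmarg i,
      Measure.restrict_apply measurableSet_Ici]
    have h2 : Ici (1:ℝ) ∩ Icc 0 1 = {1} := by
      ext s
      simp only [mem_inter_iff, mem_Ici, mem_Icc, mem_singleton_iff]
      constructor
      · rintro ⟨h, _, h'⟩; linarith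
      · rintro rfl; norm_num
    rw [h2]
    exact Real.volume_singleton
  -- the good case
  have good : ∀ u : Fin d → ℝ, (∀ i, u i ≠ 0 ∧ u i ≠ 1) →
      ν {v | ∀ i, v i ≤ u i} = H {x | ∀ i, F i (x i) ≤ u i} := by
    intro u hu
    by_cases hneg : ∃ i, u i < 0
    · obtain ⟨i, hi⟩ := hneg
      have hL : ν {v | ∀ j, v j ≤ u j} = 0 := by
        have hsub : {v : Fin d → ℝ | ∀ j, v j ≤ u j} ⊆ {v : Fin d → ℝ | v i ≤ u i} :=
          fun v hv => hv i
        refine measure_mono_null hsub ?_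
        rw [hνle i (u i)]
        have hem : Iic (u i) ∩ Icc (0:ℝ) 1 = ∅ := by
          ext s
          simp only [mem_inter_iff, mem_Iic, mem_Icc, mem_empty_iff_false, iff_false, not_and]
          intro h1 h2
          linarith [h2]
        rw [hem]
        simp
      have hR : {x : Fin d → ℝ | ∀ j, F j (x j) ≤ u j} = ∅ := by
        ext x
        simp only [mem_setOf_eq, mem_empty_iff_false, iff_false, not_forall, not_le]
        exact ⟨i, lt_of_lt_of_le hi (hF01 i (x i)).1⟩
      rw [hL, hR]
      simp
    push_neg at hneg
    have hpos : ∀ i, 0 < u i := fun i => lt_of_le_of_ne (hneg i) (Ne.symm (hu i).1)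
    have htri : ∀ i, u i < 1 ∨ 1 < u i := fun i => (hu i).2.lt_or_gt
    have hex : ∀ i, u i < 1 → ∃ s, F i s = u i := by
      intro i h
      haveI := hρprob i
      exact exists_cdf1_eq (ρ i) (hρatom i) (hpos i) h
    set t : Fin d → ℝ := fun i => if h : u i < 1 then (hex i h).choose else 0 with htdef
    have ht : ∀ i, u i < 1 → F i (t i) = u i := by
      intro i h
      simp only [htdef, dif_pos h]
      exact (hex i h).choose_spec
    set X : ℕ → Fin d → ℝ := fun n i => if 1 < u i then (n:ℝ) else t i with hX
    have hFtop : ∀ i, Tendsto (fun n : ℕ => F i (n:ℝ)) atTop (𝓝 1) := by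
      intro i
      haveI := hρprob i
      exact (tendsto_cdf1_atTop (ρ i)).comp tendsto_natCast_atTop_atTop
    -- identification of T (X n)
    have hTX : ∀ (n : ℕ) (i : Fin d), F i (X n i) = if 1 < u i then F i (n:ℝ) else u i := by
      intro n i
      by_cases h : 1 < u i
      · simp only [hX, if_pos h]
      · have h' : u i < 1 := (htri i).resolve_right h
        simp only [hX, if_neg h]
        exact ht i h'
    set A : Set (Fin d → ℝ) := {x | ∀ i, ¬ 1 < u i → x i ≤ t i} with hAdef
    have hnonempty : Nonempty (Fin d) := ⟨⟨0, hd⟩⟩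
    have hAun : (⋃ n : ℕ, {x : Fin d → ℝ | ∀ i, x i ≤ X n i}) = A := by
      apply Subset.antisymm
      · refine iUnion_subset fun n x hx i hi => ?_
        have := hx i
        simp only [hX] at this
        rwa [if_neg hi] at this
      · intro x hx
        obtain ⟨n, hn⟩ := exists_nat_ge (Finset.univ.sup' Finset.univ_nonempty x)
        refine mem_iUnion.2 ⟨n, fun i => ?_⟩
        by_cases h : 1 < u i
        · simp only [hX, if_pos h]
          exact (Finset.le_sup' x (Finset.mem_univ i)).trans hn
        · simp only [hX, if_neg h]
          exact hx i h
    have hmonoX : Monotone (fun n : ℕ => {x : Fin d → ℝ | ∀ i, x i ≤ X n i}) := by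
      intro m n hmn x hx i
      refine (hx i).trans ?_
      by_cases h : 1 < u i
      · simp only [hX, if_pos h]
        exact_mod_cast hmn
      · simp only [hX, if_neg h, le_refl]
    have hHA : H A = ⨆ n : ℕ, H {x : Fin d → ℝ | ∀ i, x i ≤ X n i} := by
      rw [← hAun]
      exact Monotone.measure_iUnion hmonoX
    have hmonoTX : Monotone (fun n : ℕ => {v : Fin d → ℝ | ∀ i, v i ≤ F i (X n i)}) := by
      intro m n hmn v hv i
      refine (hv i).trans ?_
      rw [hTX m i, hTX n i]
      by_cases h : 1 < u i
      · simp only [if_pos h]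
        exact hFmono i (by exact_mod_cast hmn)
      · simp only [if_neg h, le_refl]
    set B : Set (Fin d → ℝ) := ⋃ n : ℕ, {v | ∀ i, v i ≤ F i (X n i)} with hBdef
    have hνB : ν B = ⨆ n : ℕ, ν {v : Fin d → ℝ | ∀ i, v i ≤ F i (X n i)} :=
      Monotone.measure_iUnion hmonoTX
    have hBsub : B ⊆ {v | ∀ i, v i ≤ u i} := by
      refine iUnion_subset fun n v hv i => ?_
      have := hv i
      rw [hTX n i] at this
      by_cases h : 1 < u i
      · rw [if_pos h] at this
        exact this.trans ((hF01 i _).2.trans h.le)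
      · rwa [if_neg h] at this
    have hboxB : ν {v : Fin d → ℝ | ∀ i, v i ≤ u i} = ν B := by
      refine le_antisymm ?_ (measure_mono hBsub)
      set D : Set (Fin d → ℝ) := ⋃ i, {v : Fin d → ℝ | 1 < u i ∧ 1 ≤ v i} with hDdef
      have hDnull : ν D = 0 := by
        refine measure_iUnion_null fun i => ?_
        by_cases h : 1 < u i
        · exact measure_mono_null (fun v hv => hv.2) (hνge i)
        · have : {v : Fin d → ℝ | 1 < u i ∧ 1 ≤ v i} = ∅ := by
            ext v
            simp only [mem_setOf_eq, mem_empty_iff_false, iff_false, not_and]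
            exact fun h' => absurd h' h
          rw [this]
          simp
      have hsub2 : {v : Fin d → ℝ | ∀ i, v i ≤ u i} ⊆ B ∪ D := by
        intro v hv
        by_cases hvB : v ∈ B
        · exact Or.inl hvB
        · refine Or.inr ?_
          rw [hDdef]
          by_contra hcon
          simp only [mem_iUnion, mem_setOf_eq, not_exists, not_and] at hcon
          have hlt1 : ∀ i, 1 < u i → v i < 1 := fun i h => lt_of_not_ge (hcon i h)
          have hexn : ∀ i, ∃ n : ℕ, (1 < u i → v i ≤ F i (n:ℝ)) := by
            intro i
            by_cases h : 1 < u i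
            · obtain ⟨n, hn⟩ :=
                ((hFtop i).eventually (eventually_gt_nhds (hlt1 i h))).exists
              exact ⟨n, fun _ => hn.le⟩
            · exact ⟨0, fun h' => absurd h' h⟩
          choose g hg using hexn
          set N := Finset.univ.sup g with hN
          apply hvB
          rw [hBdef]
          refine mem_iUnion.2 ⟨N, fun i => ?_⟩
          rw [hTX N i]
          by_cases h : 1 < u i
          · rw [if_pos h]
            refine (hg i h).trans (hFmono i ?_)
            exact_mod_cast Finset.le_sup (Finset.mem_univ i)
          · rw [if_neg h]
            exact hv i
        
      calc ν {v : Fin d → ℝ | ∀ i, v i ≤ u i} ≤ ν (B ∪ D) := measure_mono hsub2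
        _ ≤ ν B + ν D := measure_union_le _ _
        _ = ν B := by rw [hDnull, add_zero]
    -- compare A with G
    set G : Set (Fin d → ℝ) := {x | ∀ i, F i (x i) ≤ u i} with hGdef
    have hAG : A ⊆ G := by
      intro x hx i
      by_cases h : 1 < u i
      · exact (hF01 i (x i)).2.trans h.le
      · have h' : u i < 1 := (htri i).resolve_right h
        exact (hFmono i (hx i h)).trans_eq (ht i h')
    have hHAG : H A = H G := by
      refine le_antisymm (measure_mono hAG) ?_
      set E : Set (Fin d → ℝ) :=
        ⋃ i, {x : Fin d → ℝ | u i < 1 ∧ t i < x i ∧ F i (x i) ≤ F i (t i)} with hEdef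
      have hEnull : H E = 0 := by
        refine measure_iUnion_null fun i => ?_
        by_cases h : u i < 1
        · have hsubE : {x : Fin d → ℝ | u i < 1 ∧ t i < x i ∧ F i (x i) ≤ F i (t i)}
              ⊆ (fun x : Fin d → ℝ => x i) ⁻¹' {s | t i < s ∧ F i s ≤ F i (t i)} :=
            fun x hx => ⟨hx.2.1, hx.2.2⟩
          refine measure_mono_null hsubE ?_
          have hSmeas : MeasurableSet {s : ℝ | t i < s ∧ F i s ≤ F i (t i)} := by
            have : {s : ℝ | t i < s ∧ F i s ≤ F i (t i)}
                = Ioi (t i) ∩ (F i) ⁻¹' (Iic (F i (t i))) := rfl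
            rw [this]
            exact measurableSet_Ioi.inter ((hFmeas i) measurableSet_Iic)
          rw [← Measure.map_apply (hproj i) hSmeas]
          haveI := hρprob i
          have := cdf1_flat_null (ρ i) (hρatom i) (t i) (by rw [show cdf1 (ρ i) (t i) = F i (t i) from rfl, ht i h]; exact h)
          exact this
        · have : {x : Fin d → ℝ | u i < 1 ∧ t i < x i ∧ F i (x i) ≤ F i (t i)} = ∅ := by
            ext x
            simp only [mem_setOf_eq, mem_empty_iff_false, iff_false, not_and]
            exact fun h' => absurd h' h
          rw [this]
          simp
      have hsubGA : G ⊆ A ∪ E := by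
        intro x hx
        by_cases hxA : x ∈ A
        · exact Or.inl hxA
        · refine Or.inr ?_
          rw [hAdef] at hxA
          simp only [mem_setOf_eq, not_forall] at hxA
          obtain ⟨i, hi, hti⟩ := hxA
          have h' : u i < 1 := (htri i).resolve_right hi
          rw [hEdef]
          refine mem_iUnion.2 ⟨i, h', lt_of_not_ge hti, ?_⟩
          rw [ht i h']
          exact hx i
      calc H G ≤ H (A ∪ E) := measure_mono hsubGA
        _ ≤ H A + H E := measure_union_le _ _
        _ = H A := by rw [hEnull, add_zero]
    -- put everything together
    calc ν {v | ∀ i, v i ≤ u i} = ν B := hboxB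
      _ = ⨆ n : ℕ, ν {v : Fin d → ℝ | ∀ i, v i ≤ F i (X n i)} := hνB
      _ = ⨆ n : ℕ, H {x : Fin d → ℝ | ∀ i, x i ≤ X n i} := by
          refine iSup_congr fun n => ?_
          exact (hsklar' (X n)).symm
      _ = H A := hHA.symm
      _ = H G := hHAG

  -- the general case
  have key : ∀ u : Fin d → ℝ,
      ν {v | ∀ i, v i ≤ u i} = H {x | ∀ i, F i (x i) ≤ u i} := by
    intro u
    have hratall : ∀ (b : Fin d → ℝ), (∀ i, u i < b i) →
        ∃ q : Fin d → ℚ, ∀ i, (u i < (q i:ℝ) ∧ ((q i:ℝ) ≠ 0 ∧ (q i:ℝ) ≠ 1)) ∧ (q i:ℝ) < b i := by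
      intro b hb
      have : ∀ i, ∃ q : ℚ, u i < (q:ℝ) ∧ (q:ℝ) < b i ∧ (q:ℝ) ≠ 0 ∧ (q:ℝ) ≠ 1 :=
        fun i => ratpick (u i) (b i) (hb i)
      choose q hq using this
      exact ⟨q, fun i => ⟨⟨(hq i).1, (hq i).2.2⟩, (hq i).2.1⟩⟩
    set S := {q : Fin d → ℚ | ∀ i, u i < (q i : ℝ) ∧ ((q i : ℝ) ≠ 0 ∧ (q i : ℝ) ≠ 1)} with hSdef
    have hSne : S.Nonempty := by
      obtain ⟨q, hq⟩ := hratall (fun i => u i + 1) (fun i => by simpa using lt_add_one (u i))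
      exact ⟨q, fun i => (hq i).1⟩
    have hSmin : ∀ q₁ ∈ S, ∀ q₂ ∈ S, (fun i => min (q₁ i) (q₂ i)) ∈ S := by
      intro q₁ h₁ q₂ h₂ i
      rcases min_choice (q₁ i) (q₂ i) with h | h <;> simp only [h]
      exacts [h₁ i, h₂ i]
    have hmin_le₁ : ∀ (q₁ q₂ : Fin d → ℚ) (i : Fin d), ((min (q₁ i) (q₂ i) : ℚ) : ℝ) ≤ (q₁ i : ℝ) := by
      intro q₁ q₂ i; push_cast; exact min_le_left _ _
    have hmin_le₂ : ∀ (q₁ q₂ : Fin d → ℚ) (i : Fin d), ((min (q₁ i) (q₂ i) : ℚ) : ℝ) ≤ (q₂ i : ℝ) := by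
      intro q₁ q₂ i; push_cast; exact min_le_right _ _
    -- ν side
    have hdirν : Directed (· ⊇ ·) (fun q : S => {v : Fin d → ℝ | ∀ i, v i ≤ ((q : Fin d → ℚ) i : ℝ)}) := by
      rintro ⟨q₁, h₁⟩ ⟨q₂, h₂⟩
      exact ⟨⟨fun i => min (q₁ i) (q₂ i), hSmin q₁ h₁ q₂ h₂⟩,
        fun v hv i => (hv i).trans (hmin_le₁ q₁ q₂ i),
        fun v hv i => (hv i).trans (hmin_le₂ q₁ q₂ i)⟩
    have hiν : (⋂ q : S, {v : Fin d → ℝ | ∀ i, v i ≤ ((q : Fin d → ℚ) i : ℝ)})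
        = {v : Fin d → ℝ | ∀ i, v i ≤ u i} := by
      apply Subset.antisymm
      · intro v hv
        simp only [mem_iInter, mem_setOf_eq] at hv
        intro i
        by_contra hlt
        push_neg at hlt
        obtain ⟨q, hq⟩ := hratall (fun j => if j = i then v i else u j + 1)
          (fun j => by
            by_cases h : j = i
            · subst h; simpa using hlt
            · simpa [h] using lt_add_one (u j))
        have hqi := (hq i).2
        rw [if_pos rfl] at hqi
        have := hv ⟨q, fun j => (hq j).1⟩ i
        linarith
      · intro v hv
        simp only [mem_iInter, mem_setOf_eq]
        rintro ⟨q, hq⟩ i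
        exact (hv i).trans (hq i).1.le
    have hνiInf : ν {v : Fin d → ℝ | ∀ i, v i ≤ u i}
        = ⨅ q : S, ν {v : Fin d → ℝ | ∀ i, v i ≤ ((q : Fin d → ℚ) i : ℝ)} := by
      rw [← hiν]
      exact Directed.measure_iInter (fun q => (measurableSet_box _).nullMeasurableSet) hdirν
        ⟨⟨hSne.choose, hSne.choose_spec⟩, measure_ne_top ν _⟩
    -- H side
    have hGmeas : ∀ c : Fin d → ℝ, MeasurableSet {x : Fin d → ℝ | ∀ i, F i (x i) ≤ c i} := by
      intro c
      have : {x : Fin d → ℝ | ∀ i, F i (x i) ≤ c i}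
          = ⋂ i, (fun x : Fin d → ℝ => F i (x i)) ⁻¹' (Iic (c i)) := by
        ext x; simp [mem_iInter]
      rw [this]
      exact MeasurableSet.iInter fun i => ((hFmeas i).comp (hproj i)) measurableSet_Iic
    have hdirH : Directed (· ⊇ ·)
        (fun q : S => {x : Fin d → ℝ | ∀ i, F i (x i) ≤ ((q : Fin d → ℚ) i : ℝ)}) := by
      rintro ⟨q₁, h₁⟩ ⟨q₂, h₂⟩
      exact ⟨⟨fun i => min (q₁ i) (q₂ i), hSmin q₁ h₁ q₂ h₂⟩,
        fun x hx i => (hx i).trans (hmin_le₁ q₁ q₂ i),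
        fun x hx i => (hx i).trans (hmin_le₂ q₁ q₂ i)⟩
    have hiH : (⋂ q : S, {x : Fin d → ℝ | ∀ i, F i (x i) ≤ ((q : Fin d → ℚ) i : ℝ)})
        = {x : Fin d → ℝ | ∀ i, F i (x i) ≤ u i} := by
      apply Subset.antisymm
      · intro x hx
        simp only [mem_iInter, mem_setOf_eq] at hx
        intro i
        by_contra hlt
        push_neg at hlt
        obtain ⟨q, hq⟩ := hratall (fun j => if j = i then F i (x i) else u j + 1)
          (fun j => by
            by_cases h : j = i
            · subst h; simpa using hlt
            · simpa [h] using lt_add_one (u j))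
        have hqi := (hq i).2
        rw [if_pos rfl] at hqi
        have := hx ⟨q, fun j => (hq j).1⟩ i
        linarith
      · intro x hx
        simp only [mem_iInter, mem_setOf_eq]
        rintro ⟨q, hq⟩ i
        exact (hx i).trans (hq i).1.le
    have hHiInf : H {x : Fin d → ℝ | ∀ i, F i (x i) ≤ u i}
        = ⨅ q : S, H {x : Fin d → ℝ | ∀ i, F i (x i) ≤ ((q : Fin d → ℚ) i : ℝ)} := by
      rw [← hiH]
      exact Directed.measure_iInter (fun q => (hGmeas _).nullMeasurableSet) hdirH
        ⟨⟨hSne.choose, hSne.choose_spec⟩, measure_ne_top H _⟩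
    rw [hνiInf, hHiInf]
    refine iInf_congr fun q => ?_
    exact good (fun i => ((q : Fin d → ℚ) i : ℝ)) (fun i => (q.2 i).2)
  -- measure extensionality
  show ν = H.map T
  have hspan : IsCountablySpanning (Set.range (Iic : ℝ → Set ℝ)) :=
    ⟨fun n => Iic (n:ℝ), fun n => ⟨(n:ℝ), rfl⟩, by
      apply eq_univ_of_forall
      intro x
      simp only [mem_iUnion, mem_Iic]
      exact exists_nat_ge x⟩
  have h1 : (inferInstance : MeasurableSpace ℝ)
      = MeasurableSpace.generateFrom (Set.range (Iic : ℝ → Set ℝ)) := by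
    rw [BorelSpace.measurable_eq (α := ℝ)]
    exact borel_eq_generateFrom_Iic ℝ
  have hgen : (inferInstance : MeasurableSpace (Fin d → ℝ))
      = MeasurableSpace.generateFrom
        (Set.pi univ '' Set.pi univ (fun _ : Fin d => Set.range (Iic : ℝ → Set ℝ))) := by
    calc (inferInstance : MeasurableSpace (Fin d → ℝ))
        = @MeasurableSpace.pi (Fin d) (fun _ => ℝ) (fun _ => (inferInstance : MeasurableSpace ℝ)) :=
          rfl
      _ = @MeasurableSpace.pi (Fin d) (fun _ => ℝ)
            (fun _ => MeasurableSpace.generateFrom (Set.range (Iic : ℝ → Set ℝ))) := by rw [h1]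
      _ = MeasurableSpace.generateFrom
            (Set.pi univ '' Set.pi univ (fun _ : Fin d => Set.range (Iic : ℝ → Set ℝ))) :=
          generateFrom_pi_eq (fun _ => hspan)
  refine ext_of_generate_finite _ hgen (IsPiSystem.pi (fun _ => isPiSystem_Iic)) ?_ ?_
  · rintro s ⟨s', hs', rfl⟩
    have hex : ∀ i, ∃ c : ℝ, Iic c = s' i := fun i => hs' i (mem_univ i)
    choose c hc using hex
    have hbox : univ.pi s' = {v : Fin d → ℝ | ∀ i, v i ≤ c i} := by
      ext v
      simp only [Set.mem_pi, mem_univ, true_implies, mem_setOf_eq]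
      refine forall_congr' fun i => ?_
      rw [← hc i, mem_Iic]
    rw [hbox, Measure.map_apply hTmeas (measurableSet_box _)]
    exact key c
  · rw [Measure.map_apply hTmeas MeasurableSet.univ, preimage_univ, measure_univ, measure_univ]

end NuEq

namespace Main

open Set Filter Topology
open scoped ENNReal
open Scratch NuEq

theorem stmt15aux (d : ℕ) (hd : 2 ≤ d) (μ ν : Measure (Fin d → ℝ))
    (hμ : IsCopulaMeasure μ) (hν : IsOrderTransform μ ν)
    (hsymm : ∀ σ : Equiv.Perm (Fin d), μ.map (fun x => x ∘ σ) = μ) :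
    (∫ u, copulaFn ν u ∂ν ≤ (Nat.factorial d : ℝ) * ∫ u, copulaFn μ u ∂μ) ∧
      ((∫ u, copulaFn μ u ∂μ) = 0 → (∫ u, copulaFn ν u ∂ν) = 0) := by
  classical
  haveI hμprob : IsProbabilityMeasure μ := hμ.1
  haveI hνprob : IsProbabilityMeasure ν := hν.1.1
  set H : Measure (Fin d → ℝ) := μ.map sortVec with hHdef
  haveI hHprob : IsProbabilityMeasure H :=
    Measure.isProbabilityMeasure_map measurable_sortVec.aemeasurable
  have hproj : ∀ i : Fin d, Measurable (fun z : Fin d → ℝ => z i) := fun i => measurable_pi_apply i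
  -- atoms of the marginals of μ vanish
  have hμatom : ∀ (j : Fin d) (t : ℝ), μ {y | y j = t} = 0 := by
    intro j t
    have h1 : {y : Fin d → ℝ | y j = t} = (fun y : Fin d → ℝ => y j) ⁻¹' {t} := rfl
    rw [h1, ← Measure.map_apply (hproj j) (measurableSet_singleton t), hμ.2 j,
      Measure.restrict_apply (measurableSet_singleton t)]
    exact measure_mono_null inter_subset_left Real.volume_singleton
  -- atoms of the marginals of H vanish
  have hHatom : ∀ (i : Fin d) (t : ℝ), H {x | x i = t} = 0 := by
    intro i t
    have hmeas : MeasurableSet {x : Fin d → ℝ | x i = t} :=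
      (hproj i) (measurableSet_singleton t)
    rw [hHdef, Measure.map_apply measurable_sortVec hmeas]
    refine measure_mono_null (fun y hy => ?_) (measure_iUnion_null (s := fun j => {y : Fin d → ℝ | y j = t}) (fun j => hμatom j t))
    exact mem_iUnion.2 ⟨Tuple.sort y i, hy⟩
  -- Sklar identity in ℝ≥0∞
  have hsklar : ∀ x : Fin d → ℝ, H {y | ∀ i, y i ≤ x i}
      = ν {v | ∀ i, v i ≤ ((H.map (fun z => z i)) (Iic (x i))).toReal} := by
    intro x
    have := hν.2 x
    exact (ENNReal.toReal_eq_toReal_iff' (measure_ne_top _ _) (measure_ne_top _ _)).1 this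
  -- identify ν with the image measure
  have hνeq : ν = H.map (fun x i => ((H.map (fun z => z i)) (Iic (x i))).toReal) :=
    nu_eq_map (by omega) H ν hHatom hν.1.2 hsklar
  set T : (Fin d → ℝ) → (Fin d → ℝ) :=
    fun x i => ((H.map (fun z => z i)) (Iic (x i))).toReal with hTdef
  have hTmeas : Measurable T := by
    refine measurable_pi_lambda _ (fun i => ?_)
    have hmono : Monotone (fun t : ℝ => ((H.map (fun z : Fin d → ℝ => z i)) (Iic t)).toReal) :=
      fun a b hab => ENNReal.toReal_mono (measure_ne_top _ _)
        (measure_mono (Iic_subset_Iic.2 hab))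
    exact hmono.measurable.comp (hproj i)
  -- the main ENNReal chain
  set fν : (Fin d → ℝ) → ℝ≥0∞ := fun u => ν {v | ∀ i, v i ≤ u i} with hfν
  set fμ : (Fin d → ℝ) → ℝ≥0∞ := fun y => μ {z | ∀ i, z i ≤ y i} with hfμ
  set fH : (Fin d → ℝ) → ℝ≥0∞ := fun x => H {y | ∀ i, y i ≤ x i} with hfH
  have hfνmeas : Measurable fν := measurable_boxCDF ν
  have hfμmeas : Measurable fμ := measurable_boxCDF μ
  have hfHmeas : Measurable fH := measurable_boxCDF H
  set A : ℝ≥0∞ := ∫⁻ u, fν u ∂ν with hA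
  set B : ℝ≥0∞ := ∫⁻ y, fμ y ∂μ with hB
  have step1 : A = ∫⁻ x, fH x ∂H := by
    rw [hA]
    conv_lhs => rw [hνeq]
    rw [lintegral_map hfνmeas hTmeas]
    refine lintegral_congr fun x => ?_
    rw [hfν, hfH]
    exact (hsklar x).symm
  have step2 : (∫⁻ x, fH x ∂H) = ∫⁻ y, fH (sortVec y) ∂μ := by
    rw [hHdef, lintegral_map hfHmeas measurable_sortVec]
  have step3 : ∀ y : Fin d → ℝ, fH (sortVec y)
      ≤ ∑ π : Equiv.Perm (Fin d), fμ (y ∘ π) := by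
    intro y
    have h1 : fH (sortVec y) = μ {z | ∀ i, sortVec z i ≤ sortVec y i} := by
      show H {y' | ∀ i, y' i ≤ sortVec y i} = _
      rw [hHdef, Measure.map_apply measurable_sortVec (measurableSet_box _)]
      rfl
    have h2 : {z : Fin d → ℝ | ∀ i, sortVec z i ≤ sortVec y i}
        ⊆ ⋃ π : Equiv.Perm (Fin d), {z : Fin d → ℝ | ∀ i, z i ≤ (y ∘ π) i} := by
      intro z hz
      obtain ⟨π, hπ⟩ := exists_perm_of_sortVec_le hz
      exact mem_iUnion.2 ⟨π, hπ⟩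
    rw [h1]
    calc μ {z | ∀ i, sortVec z i ≤ sortVec y i}
        ≤ μ (⋃ π : Equiv.Perm (Fin d), {z : Fin d → ℝ | ∀ i, z i ≤ (y ∘ π) i}) :=
          measure_mono h2
      _ ≤ ∑ π : Equiv.Perm (Fin d), μ {z : Fin d → ℝ | ∀ i, z i ≤ (y ∘ π) i} :=
          measure_iUnion_fintype_le _ _
  have step4 : ∀ π : Equiv.Perm (Fin d), (∫⁻ y, fμ (y ∘ π) ∂μ) = B := by
    intro π
    have hπmeas : Measurable (fun y : Fin d → ℝ => y ∘ π) :=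
      measurable_pi_lambda _ (fun i => hproj (π i))
    rw [hB]
    conv_rhs => rw [← hsymm π]
    rw [lintegral_map hfμmeas hπmeas]
  have hmain : A ≤ (d.factorial : ℝ≥0∞) * B := by
    calc A = ∫⁻ y, fH (sortVec y) ∂μ := by rw [step1, step2]
      _ ≤ ∫⁻ y, ∑ π : Equiv.Perm (Fin d), fμ (y ∘ π) ∂μ := lintegral_mono step3
      _ = ∑ π : Equiv.Perm (Fin d), ∫⁻ y, fμ (y ∘ π) ∂μ := by
          refine lintegral_finset_sum _ (fun π _ => ?_)
          exact hfμmeas.comp (measurable_pi_lambda _ (fun i => hproj (π i)))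
      _ = ∑ _π : Equiv.Perm (Fin d), B := by
          refine Finset.sum_congr rfl fun π _ => step4 π
      _ = (d.factorial : ℝ≥0∞) * B := by
          rw [Finset.sum_const, Finset.card_univ, Fintype.card_perm, Fintype.card_fin,
            nsmul_eq_mul]
  -- bounds
  have hBle : B ≤ 1 := by
    rw [hB]
    calc (∫⁻ y, fμ y ∂μ) ≤ ∫⁻ _, 1 ∂μ := lintegral_mono (fun y => prob_le_one)
      _ = 1 := by simp
  have hAle : A ≤ 1 := by
    rw [hA]
    calc (∫⁻ u, fν u ∂ν) ≤ ∫⁻ _, 1 ∂ν := lintegral_mono (fun u => prob_le_one)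
      _ = 1 := by simp
  have hBne : B ≠ ⊤ := ne_top_of_le_ne_top ENNReal.one_ne_top hBle
  have hAne : A ≠ ⊤ := ne_top_of_le_ne_top ENNReal.one_ne_top hAle
  -- real-valued integrals
  have hνint : ∫ u, copulaFn ν u ∂ν = A.toReal := by
    rw [hA]
    rw [← integral_toReal hfνmeas.aemeasurable (ae_of_all _ fun u => measure_lt_top ν _)]
    rfl
  have hμint : ∫ y, copulaFn μ y ∂μ = B.toReal := by
    rw [hB]
    rw [← integral_toReal hfμmeas.aemeasurable (ae_of_all _ fun y => measure_lt_top μ _)]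
    rfl
  constructor
  · rw [hνint, hμint]
    calc A.toReal ≤ ((d.factorial : ℝ≥0∞) * B).toReal :=
        ENNReal.toReal_mono (ENNReal.mul_ne_top (ENNReal.natCast_ne_top _) hBne) hmain
      _ = (d.factorial : ℝ) * B.toReal := by
        rw [ENNReal.toReal_mul, ENNReal.toReal_natCast]
  · intro h0
    rw [hμint] at h0
    have hB0 : B = 0 := by
      rcases (ENNReal.toReal_eq_zero_iff _).1 h0 with h | h
      · exact h
      · exact absurd h hBne
    have hA0 : A = 0 := le_antisymm (by simpa [hB0] using hmain) zero_le
    rw [hνint, hA0, ENNReal.toReal_zero]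

end Main

theorem stmt15 (d : ℕ) (hd : 2 ≤ d) (μ ν : Measure (Fin d → ℝ))
    (hμ : IsCopulaMeasure μ) (hν : IsOrderTransform μ ν)
    (hsymm : ∀ σ : Equiv.Perm (Fin d), μ.map (fun x => x ∘ σ) = μ) :
    (∫ u, copulaFn ν u ∂ν ≤ (Nat.factorial d : ℝ) * ∫ u, copulaFn μ u ∂μ) ∧
      ((∫ u, copulaFn μ u ∂μ) = 0 → (∫ u, copulaFn ν u ∂ν) = 0) :=
  Main.stmt15aux d hd μ ν hμ hν hsymm
end

section
/- With the notation of i.i.d. uniform samples, for every k ∈ {2,...,d} the identity 1/(d+1) + (1/(2d)) ∑_{l=1}^{d-k} C(d,l-1) C(d,l)/C(2d-1,2l-1) = 1/2 − (1/4) ∑_{h=2}^k (1/(2h-1)) C(2h,h) C(2d+2-2h, d+1-h) / C(2d, d) holds. -/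
open Finset

private lemma conv_catalan (m : ℕ) :
    2 * ∑ i ∈ range (m+1), catalan i * Nat.centralBinom (m - i)
      = Nat.centralBinom (m+1) := by
  have hc : ∑ i ∈ range (m+1), catalan i * catalan (m-i) = catalan (m+1) := by
    rw [catalan_succ]
    exact (Fin.sum_univ_eq_sum_range (fun i => catalan i * catalan (m - i)) (m+1)).symm
  have hrw : ∑ i ∈ range (m+1), catalan i * Nat.centralBinom (m - i)
      = ∑ i ∈ range (m+1), catalan i * ((m - i + 1) * catalan (m - i)) :=
    sum_congr rfl fun i _ => by rw [succ_mul_catalan_eq_centralBinom]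
  have hrefl : ∑ j ∈ range (m+1), catalan (m-j) * ((j+1) * catalan j)
      = ∑ i ∈ range (m+1), catalan i * ((m - i + 1) * catalan (m - i)) := by
    rw [← Finset.sum_range_reflect (fun i => catalan i * ((m - i + 1) * catalan (m - i))) (m+1)]
    refine sum_congr rfl fun j hj => ?_
    simp only [mem_range] at hj
    have h1 : m + 1 - 1 - j = m - j := by omega
    have h2 : m - (m - j) = j := by omega
    simp only [h1, h2]
  have key : 2 * ∑ i ∈ range (m+1), catalan i * ((m-i+1) * catalan (m-i))
      = (m+1+1) * ∑ i ∈ range (m+1), catalan i * catalan (m-i) := by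
    rw [two_mul]
    nth_rewrite 1 [← hrefl]
    rw [← Finset.sum_add_distrib, Finset.mul_sum]
    refine sum_congr rfl fun i hi => ?_
    simp only [mem_range] at hi
    have h3 : m + 1 + 1 = (m - i + 1) + (i + 1) := by omega
    rw [h3]; ring
  rw [hrw, key, hc]
  exact succ_mul_catalan_eq_centralBinom (m+1)

private lemma base_case (d : ℕ) (hd : 2 ≤ d) :
    (1 : ℚ) / (d + 1) = 1 / 2 - (1 / 4) *
        ∑ h ∈ Finset.Icc 2 d,
          (1 / (2 * (h : ℚ) - 1)) * (Nat.choose (2 * h) h : ℚ) *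
            (Nat.choose (2 * d + 2 - 2 * h) (d + 1 - h) : ℚ) /
              (Nat.choose (2 * d) d : ℚ) := by
  obtain ⟨e, rfl⟩ : ∃ e, d = e + 2 := ⟨d - 2, by omega⟩
  have hcbne : ((Nat.centralBinom (e+2) : ℚ)) ≠ 0 :=
    Nat.cast_ne_zero.mpr (Nat.centralBinom_ne_zero _)
  have hterm : ∀ h ∈ Finset.Icc 2 (e+2),
      (1 / (2 * (h : ℚ) - 1)) * (Nat.choose (2 * h) h : ℚ) *
        (Nat.choose (2 * (e+2) + 2 - 2 * h) ((e+2) + 1 - h) : ℚ) /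
          (Nat.choose (2 * (e+2)) (e+2) : ℚ)
      = 2 * (catalan (h-1) : ℚ) * (Nat.centralBinom ((e+2)+1-h) : ℚ)
          / (Nat.centralBinom (e+2) : ℚ) := by
    intro h hh
    simp only [mem_Icc] at hh
    obtain ⟨j, rfl⟩ : ∃ j, h = j + 1 := ⟨h - 1, by omega⟩
    have e1 : 2*(e+2)+2-2*(j+1) = 2*((e+2)+1-(j+1)) := by omega
    rw [e1]
    have hc1 : ((Nat.choose (2*(j+1)) (j+1)) : ℚ) = (Nat.centralBinom (j+1) : ℚ) := rfl
    have hc2 : ((Nat.choose (2*((e+2)+1-(j+1))) ((e+2)+1-(j+1))) : ℚ)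
        = (Nat.centralBinom ((e+2)+1-(j+1)) : ℚ) := rfl
    have hc3 : ((Nat.choose (2*(e+2)) (e+2)) : ℚ) = (Nat.centralBinom (e+2) : ℚ) := rfl
    rw [hc1, hc2, hc3]
    have hcatn : Nat.centralBinom (j+1) = 2*(2*j+1) * catalan j := by
      have h1 : (j+1) * Nat.centralBinom (j+1) = (j+1) * (2*(2*j+1) * catalan j) := by
        rw [Nat.succ_mul_centralBinom_succ j, ← succ_mul_catalan_eq_centralBinom j]; ring
      exact Nat.eq_of_mul_eq_mul_left (Nat.succ_pos j) h1
    have hcat : (Nat.centralBinom (j+1) : ℚ) = 2*(2*(j:ℚ)+1) * (catalan j : ℚ) := by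
      exact_mod_cast congrArg (Nat.cast (R := ℚ)) hcatn
    rw [hcat]
    have hj1 : ((j+1 : ℕ) : ℚ) = (j : ℚ) + 1 := by push_cast; ring
    rw [hj1]
    have hne : 2 * ((j:ℚ)+1) - 1 ≠ 0 := by
      have : 2 * ((j:ℚ)+1) - 1 = 2*(j:ℚ)+1 := by ring
      rw [this]; positivity
    have hj11 : (j + 1 - 1 : ℕ) = j := by omega
    rw [hj11]
    field_simp
    ring
  rw [Finset.sum_congr rfl hterm]
  -- Nat-level sum identity
  set N : ℕ := ∑ h ∈ Finset.Icc 2 (e+2), catalan (h-1) * Nat.centralBinom ((e+2)+1-h) with hN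
  have hsum : ∑ h ∈ Finset.Icc 2 (e+2),
      (2 * (catalan (h-1) : ℚ) * (Nat.centralBinom ((e+2)+1-h) : ℚ)
        / (Nat.centralBinom (e+2) : ℚ))
      = 2 * (N : ℚ) / (Nat.centralBinom (e+2) : ℚ) := by
    rw [hN]
    push_cast
    rw [Finset.mul_sum, Finset.sum_div]
    refine sum_congr rfl fun h _ => by ring
  rw [hsum]
  -- compute N
  have hNval : N = ∑ i ∈ range (e+1), catalan (i+1) * Nat.centralBinom (e+1-i) := by
    rw [hN, ← Finset.Ico_add_one_right_eq_Icc, Finset.sum_Ico_eq_sum_range]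
    refine sum_congr (by rw [show e+2+1-2 = e+1 from by omega]) fun i _ => ?_
    have a1 : 2 + i - 1 = i + 1 := by omega
    have a2 : (e+2)+1-(2+i) = e+1-i := by omega
    rw [a1, a2]
  have hconv := conv_catalan (e+2)
  have hsplit : ∑ i ∈ range (e+2+1), catalan i * Nat.centralBinom (e+2-i)
      = Nat.centralBinom (e+2) + (N + catalan (e+2)) := by
    rw [Finset.sum_range_succ' (fun i => catalan i * Nat.centralBinom (e+2-i)) (e+2)]
    rw [Finset.sum_range_succ]
    simp only [catalan_zero, Nat.sub_self, Nat.centralBinom_zero, Nat.sub_zero,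
      one_mul, mul_one]
    rw [hNval]
    have : ∀ i ∈ range (e+1), catalan (i+1) * Nat.centralBinom (e+2-(i+1))
        = catalan (i+1) * Nat.centralBinom (e+1-i) := by
      intro i _
      congr 2
      omega
    rw [Finset.sum_congr rfl this]
    ring
  rw [hsplit] at hconv
  -- now cast everything and finish with field arithmetic
  have hA : (2:ℚ) * ((Nat.centralBinom (e+2) : ℚ) + ((N:ℚ) + (catalan (e+2) : ℚ)))
      = (Nat.centralBinom (e+2+1) : ℚ) := by exact_mod_cast congrArg (Nat.cast (R := ℚ)) hconv
  have hB : ((e:ℚ)+3) * (catalan (e+2) : ℚ) = (Nat.centralBinom (e+2) : ℚ) := by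
    have := succ_mul_catalan_eq_centralBinom (e+2)
    have := congrArg (Nat.cast (R := ℚ)) this
    push_cast at this
    linarith [this]
  have hC : ((e:ℚ)+3) * (Nat.centralBinom (e+2+1) : ℚ)
      = 2*(2*((e:ℚ)+2)+1) * (Nat.centralBinom (e+2) : ℚ) := by
    have := Nat.succ_mul_centralBinom_succ (e+2)
    have := congrArg (Nat.cast (R := ℚ)) this
    push_cast at this
    linarith [this]
  have hNq : ((e:ℚ)+3) * (N:ℚ) = ((e:ℚ)+1) * (Nat.centralBinom (e+2) : ℚ) := by
    linear_combination (((e:ℚ)+3)/2) * hA - hB + (1/2) * hC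
  have hcast : (((e:ℕ)+2 : ℕ) : ℚ) = (e:ℚ)+2 := by push_cast; ring
  rw [hcast]
  have h3 : ((e:ℚ)+3) ≠ 0 := by positivity
  field_simp
  linear_combination (4 : ℚ) * hNq

private lemma step_term (k n : ℕ) :
    (1 / (2 * ((k+n+1 : ℕ) : ℚ))) *
      ((Nat.choose (k+n+1) (n+1-1) : ℚ) * (Nat.choose (k+n+1) (n+1) : ℚ) /
        (Nat.choose (2*(k+n+1)-1) (2*(n+1)-1) : ℚ))
    = (1/4) * ((1 / (2 * ((k+1 : ℕ) : ℚ) - 1)) * (Nat.choose (2*(k+1)) (k+1) : ℚ) *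
        (Nat.choose (2*(k+n+1)+2-2*(k+1)) ((k+n+1)+1-(k+1)) : ℚ) /
          (Nat.choose (2*(k+n+1)) (k+n+1) : ℚ)) := by
  have r1 : n+1-1 = n := by omega
  have r3 : 2*(k+n+1) = 2*k+2*n+2 := by omega
  have r2 : 2*(n+1)-1 = 2*n+1 := by omega
  have r4 : 2*k+2*n+2-1 = 2*k+2*n+1 := by omega
  have r5 : 2*(k+1) = 2*k+2 := by omega
  have r6 : 2*k+2*n+2+2-(2*k+2) = 2*n+2 := by omega
  have r7 : (k+n+1)+1-(k+1) = n+1 := by omega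
  simp only [r1, r3, r2, r4, r5, r6, r7]
  rw [Nat.cast_choose ℚ (show n ≤ k+n+1 by omega),
    Nat.cast_choose ℚ (show n+1 ≤ k+n+1 by omega),
    Nat.cast_choose ℚ (show 2*n+1 ≤ 2*k+2*n+1 by omega),
    Nat.cast_choose ℚ (show k+1 ≤ 2*k+2 by omega),
    Nat.cast_choose ℚ (show n+1 ≤ 2*n+2 by omega),
    Nat.cast_choose ℚ (show k+n+1 ≤ 2*k+2*n+2 by omega)]
  have s1 : (k+n+1)-n = k+1 := by omega
  have s2 : (k+n+1)-(n+1) = k := by omega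
  have s3 : (2*k+2*n+1)-(2*n+1) = 2*k := by omega
  have s4 : (2*k+2)-(k+1) = k+1 := by omega
  have s5 : (2*n+2)-(n+1) = n+1 := by omega
  have s6 : (2*k+2*n+2)-(k+n+1) = k+n+1 := by omega
  simp only [s1, s2, s3, s4, s5, s6]
  have f1 : (2*k+2).factorial = (2*k+2) * ((2*k+1) * (2*k).factorial) := by
    rw [show 2*k+2 = (2*k+1)+1 by omega, Nat.factorial_succ, Nat.factorial_succ]
  have f2 : (2*n+2).factorial = (2*n+2) * (2*n+1).factorial := by
    rw [show 2*n+2 = (2*n+1)+1 by omega, Nat.factorial_succ]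
  have f3 : (2*k+2*n+2).factorial = (2*k+2*n+2) * (2*k+2*n+1).factorial := by
    rw [show 2*k+2*n+2 = (2*k+2*n+1)+1 by omega, Nat.factorial_succ]
  have f4 : (k+1).factorial = (k+1) * k.factorial := Nat.factorial_succ k
  have f5 : (n+1).factorial = (n+1) * n.factorial := Nat.factorial_succ n
  rw [f1, f2, f3, f4, f5]
  have hk1 : ((k+1 : ℕ) : ℚ) = (k:ℚ)+1 := by push_cast; ring
  have hkn1 : ((k+n+1 : ℕ) : ℚ) = (k:ℚ)+(n:ℚ)+1 := by push_cast; ring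
  rw [hk1, hkn1]
  have hne1 : 2*((k:ℚ)+1)-1 ≠ 0 := by
    rw [show 2*((k:ℚ)+1)-1 = 2*(k:ℚ)+1 by ring]; positivity
  have hne2 : (k:ℚ)+(n:ℚ)+1 ≠ 0 := by positivity
  have hf : ∀ m : ℕ, ((m.factorial : ℚ)) ≠ 0 := fun m =>
    Nat.cast_ne_zero.mpr (Nat.factorial_ne_zero m)
  push_cast
  field_simp
  ring

theorem stmt17 (d k : ℕ) (hk : 2 ≤ k) (hkd : k ≤ d) :
    (1 : ℚ) / (d + 1) + (1 / (2 * d)) *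
        ∑ l ∈ Finset.Icc 1 (d - k),
          (Nat.choose d (l - 1) : ℚ) * (Nat.choose d l : ℚ) /
            (Nat.choose (2 * d - 1) (2 * l - 1) : ℚ)
      = 1 / 2 - (1 / 4) *
        ∑ h ∈ Finset.Icc 2 k,
          (1 / (2 * (h : ℚ) - 1)) * (Nat.choose (2 * h) h : ℚ) *
            (Nat.choose (2 * d + 2 - 2 * h) (d + 1 - h) : ℚ) /
              (Nat.choose (2 * d) d : ℚ) := by
  suffices h : ∀ j k : ℕ, 2 ≤ k → k ≤ d → j = d - k →
      (1 : ℚ) / (d + 1) + (1 / (2 * d)) *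
        ∑ l ∈ Finset.Icc 1 (d - k),
          (Nat.choose d (l - 1) : ℚ) * (Nat.choose d l : ℚ) /
            (Nat.choose (2 * d - 1) (2 * l - 1) : ℚ)
      = 1 / 2 - (1 / 4) *
        ∑ h ∈ Finset.Icc 2 k,
          (1 / (2 * (h : ℚ) - 1)) * (Nat.choose (2 * h) h : ℚ) *
            (Nat.choose (2 * d + 2 - 2 * h) (d + 1 - h) : ℚ) /
              (Nat.choose (2 * d) d : ℚ) from h (d-k) k hk hkd rfl
  intro j
  induction j with
  | zero =>
    intro k hk hkd hj
    have hkd' : k = d := by omega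
    subst hkd'
    rw [show k - k = 0 by omega]
    rw [show Finset.Icc 1 0 = (∅ : Finset ℕ) from by
      apply Finset.Icc_eq_empty; omega]
    rw [Finset.sum_empty, mul_zero, add_zero]
    exact base_case k hk
  | succ n ih =>
    intro k hk hkd hj
    have H := ih (k+1) (by omega) (by omega) (by omega)
    have e1 : d - k = n + 1 := by omega
    have e2 : d - (k+1) = n := by omega
    rw [e2] at H
    rw [e1]
    rw [← Finset.insert_Icc_right_eq_Icc_add_one (show 1 ≤ n+1 by omega),
      Finset.sum_insert (by simp)]
    rw [← Finset.insert_Icc_right_eq_Icc_add_one (show 2 ≤ k+1 by omega),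
      Finset.sum_insert (by simp)] at H
    have hd' : d = k + n + 1 := by omega
    rw [hd'] at H ⊢
    have key := step_term k n
    linear_combination H + key
end

section
/- Let X, Y be i.i.d. uniform[0,1] random variables with an independent i.i.d. copy X', Y' from the same distribution, in a sample of size d ≥ 2 of i.i.d. uniforms. The bivariate Kendall's tau of the two smallest order statistics (X_{1:d}, X_{2:d}) equals (d-1)/(2d-1); i.e., κ[ρ_{{1,2}}(Π_T)] = (d-1)/(2d-1). -/
set_option maxHeartbeats 1000000

open Set
open scoped ENNReal


open MeasureTheory

/-- The uniform distribution on `[0,1]`. -/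
noncomputable def unif : Measure ℝ := volume.restrict (Set.Icc 0 1)

/-- The joint distribution of `d` i.i.d. uniform `[0,1]` random variables. -/
noncomputable def unifPi (d : ℕ) : Measure (Fin d → ℝ) :=
  Measure.pi fun _ => unif

instance : IsProbabilityMeasure unif := ⟨by simp [unif]⟩
instance (d : ℕ) : IsProbabilityMeasure (unifPi d) := by
  unfold unifPi; infer_instance

lemma unif_apply (S : Set ℝ) : unif S = volume (S ∩ Set.Icc 0 1) :=
  Measure.restrict_apply' measurableSet_Icc

lemma unif_Ioi {t : ℝ} (h0 : 0 ≤ t) (h1 : t ≤ 1) : unif (Ioi t) = ENNReal.ofReal (1 - t) := by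
  rw [unif_apply]
  have : Ioi t ∩ Icc 0 1 = Ioc t 1 := by
    ext r; simp only [mem_inter_iff, mem_Ioi, mem_Icc, mem_Ioc]
    constructor
    · rintro ⟨h, _, h2⟩; exact ⟨h, h2⟩
    · rintro ⟨h, h2⟩; exact ⟨h, le_trans h0 h.le, h2⟩
  rw [this, Real.volume_Ioc]

lemma unif_Iio {t : ℝ} (h0 : 0 ≤ t) (h1 : t ≤ 1) : unif (Iio t) = ENNReal.ofReal t := by
  rw [unif_apply]
  have : Iio t ∩ Icc 0 1 = Ico 0 t := by
    ext r; simp only [mem_inter_iff, mem_Iio, mem_Icc, mem_Ico]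
    exact ⟨fun ⟨h, h2, _⟩ => ⟨h2, h⟩, fun ⟨h, h2⟩ => ⟨h2, h, (h2.le.trans h1)⟩⟩
  rw [this, Real.volume_Ico, sub_zero]

lemma unif_Iic {t : ℝ} (h0 : 0 ≤ t) (h1 : t ≤ 1) : unif (Iic t) = ENNReal.ofReal t := by
  rw [unif_apply]
  have : Iic t ∩ Icc 0 1 = Icc 0 t := by
    ext r; simp only [mem_inter_iff, mem_Iic, mem_Icc]
    exact ⟨fun ⟨h, h2, _⟩ => ⟨h2, h⟩, fun ⟨h2, h⟩ => ⟨h, h2, h.trans h1⟩⟩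
  rw [this, Real.volume_Icc, sub_zero]

lemma unif_Ioc {s u : ℝ} (h0 : 0 ≤ s) (h1 : u ≤ 1) : unif (Ioc s u) = ENNReal.ofReal (u - s) := by
  rw [unif_apply]
  rcases le_or_gt s u with h | h
  · have : Ioc s u ∩ Icc 0 1 = Ioc s u := by
      apply inter_eq_left.2
      intro r hr; exact ⟨le_trans h0 hr.1.le, hr.2.trans h1⟩
    rw [this, Real.volume_Ioc]
  · rw [Ioc_eq_empty (not_lt.2 h.le), empty_inter]
    simp [ENNReal.ofReal_of_nonpos (by linarith : u - s ≤ 0)]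


/-- number of coordinates `≤ t` -/
noncomputable def cnt {d : ℕ} (t : ℝ) (x : Fin d → ℝ) : ℕ := Fintype.card {i // x i ≤ t}

lemma sortVec_le_iff {d : ℕ} (x : Fin d → ℝ) (j : Fin d) (t : ℝ) :
    sortVec x j ≤ t ↔ (j : ℕ) < cnt t x := by
  classical
  have h := Tuple.lt_card_le_iff_apply_le_of_monotone (f := x ∘ Tuple.sort x) (a := t)
    (j := j) (Tuple.monotone_sort x)
  have hc : (Finset.univ.filter fun i => (x ∘ Tuple.sort x) i ≤ t).card = cnt t x := by
    rw [cnt, ← Fintype.card_subtype]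
    exact Fintype.card_congr ((Tuple.sort x).subtypeEquiv (fun i => Iff.rfl))
  rw [sortVec, ← h, hc]

lemma cnt_pos_iff {d : ℕ} (t : ℝ) (x : Fin d → ℝ) : 0 < cnt t x ↔ ∃ i, x i ≤ t := by
  rw [cnt, Fintype.card_pos_iff]
  exact ⟨fun ⟨⟨i, hi⟩⟩ => ⟨i, hi⟩, fun ⟨i, hi⟩ => ⟨⟨i, hi⟩⟩⟩

lemma cnt_le_one_iff {d : ℕ} (t : ℝ) (x : Fin d → ℝ) :
    cnt t x ≤ 1 ↔ ∀ i j, x i ≤ t → x j ≤ t → i = j := by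
  rw [cnt, Fintype.card_le_one_iff]
  constructor
  · intro h i j hi hj
    simpa using congrArg Subtype.val (h ⟨i, hi⟩ ⟨j, hj⟩)
  · rintro h ⟨i, hi⟩ ⟨j, hj⟩
    exact Subtype.ext (h i j hi hj)

lemma measurable_cnt {d : ℕ} (t : ℝ) : Measurable fun x : Fin d → ℝ => cnt t x := by
  classical
  have : (fun x : Fin d → ℝ => cnt t x)
      = fun x => ∑ i : Fin d, if x i ≤ t then 1 else 0 := by
    funext x
    rw [cnt, Fintype.card_subtype, Finset.card_eq_sum_ones, Finset.sum_filter]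
  rw [this]
  exact Finset.measurable_sum _ fun i _ =>
    Measurable.ite (measurableSet_le (measurable_pi_apply i) measurable_const)
      measurable_const measurable_const

lemma measurable_sortVec {d : ℕ} (j : Fin d) : Measurable fun x : Fin d → ℝ => sortVec x j := by
  apply measurable_of_Iic
  intro t
  have : (fun x : Fin d → ℝ => sortVec x j) ⁻¹' Iic t = {x | (j : ℕ) < cnt t x} := by
    ext x; simp [sortVec_le_iff]
  rw [this]
  exact measurableSet_lt measurable_const (measurable_cnt t)

lemma sortVec_mono {d : ℕ} (x : Fin d → ℝ) : Monotone (sortVec x) := Tuple.monotone_sort x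

lemma sortVec_mem {d : ℕ} {x : Fin d → ℝ} {S : Set ℝ} (hx : ∀ i, x i ∈ S) (j : Fin d) :
    sortVec x j ∈ S := hx _
lemma prodset {d : ℕ} (T : Set ℝ) (hT : MeasurableSet T) :
    unifPi d {x | ∀ i, x i ∈ T} = unif T ^ d := by
  have : {x : Fin d → ℝ | ∀ i, x i ∈ T} = Set.pi univ (fun _ => T) := by
    ext x; simp [Set.mem_pi]
  rw [unifPi, this, Measure.pi_pi]
  simp [Finset.prod_const]

lemma onecount {d : ℕ} (S T : Set ℝ) (hS : MeasurableSet S) (hT : MeasurableSet T)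
    (hdisj : ∀ r, r ∈ S → r ∉ T) :
    unifPi d {x | ∃ i, x i ∈ S ∧ ∀ j, j ≠ i → x j ∈ T}
      = d * unif S * unif T ^ (d - 1) := by
  classical
  set B : Fin d → Set (Fin d → ℝ) := fun i => Set.pi univ (fun j => if j = i then S else T)
    with hB
  have hset : {x : Fin d → ℝ | ∃ i, x i ∈ S ∧ ∀ j, j ≠ i → x j ∈ T} = ⋃ i, B i := by
    ext x
    simp only [mem_setOf_eq, mem_iUnion, hB, Set.mem_pi, mem_univ, true_imp_iff]
    constructor
    · rintro ⟨i, h1, h2⟩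
      refine ⟨i, fun j => ?_⟩
      by_cases hj : j = i
      · simpa [hj] using h1
      · simpa [hj] using h2 j hj
    · rintro ⟨i, h⟩
      refine ⟨i, by simpa using h i, fun j hj => by simpa [hj] using h j⟩
  have hBm : ∀ i, MeasurableSet (B i) := fun i =>
    MeasurableSet.univ_pi (fun j => by by_cases hj : j = i <;> simp [hj, hS, hT])
  have hBd : Pairwise (Function.onFun Disjoint B) := by
    intro i j hij
    rw [Function.onFun, Set.disjoint_left]
    intro x hxi hxj
    simp only [hB, Set.mem_pi, mem_univ, true_imp_iff] at hxi hxj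
    have h1 := hxi i
    have h2 := hxj i
    rw [if_pos rfl] at h1
    rw [if_neg hij] at h2
    exact hdisj _ h1 h2
  have hval : ∀ i, unifPi d (B i) = unif S * unif T ^ (d - 1) := by
    intro i
    rw [hB, unifPi, Measure.pi_pi]
    rw [← Finset.mul_prod_erase Finset.univ _ (Finset.mem_univ i)]
    simp only [if_pos rfl]
    congr 1
    rw [Finset.prod_congr rfl (fun j hj => by
      rw [if_neg (Finset.ne_of_mem_erase hj)]), Finset.prod_const,
      Finset.card_erase_of_mem (Finset.mem_univ i), Finset.card_univ, Fintype.card_fin]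
  rw [hset, measure_iUnion hBd hBm]
  simp only [hval, tsum_fintype, Finset.sum_const, Finset.card_univ, Fintype.card_fin,
    nsmul_eq_mul, mul_assoc]

lemma meas_all_gt {d : ℕ} {s : ℝ} (h0 : 0 ≤ s) (h1 : s ≤ 1) :
    unifPi d {x | ∀ i, s < x i} = ENNReal.ofReal (1 - s) ^ d := by
  rw [show {x : Fin d → ℝ | ∀ i, s < x i} = {x | ∀ i, x i ∈ Ioi s} from rfl,
    prodset _ measurableSet_Ioi, unif_Ioi h0 h1]

lemma measset_all_gt {d : ℕ} (s : ℝ) : MeasurableSet {x : Fin d → ℝ | ∀ i, s < x i} := by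
  have : {x : Fin d → ℝ | ∀ i, s < x i} = ⋂ i, (fun x : Fin d → ℝ => x i) ⁻¹' Ioi s := by
    ext x; simp
  rw [this]
  exact MeasurableSet.iInter fun i => (measurable_pi_apply i) measurableSet_Ioi

lemma measset_cnt_le {d : ℕ} (u : ℝ) (k : ℕ) : MeasurableSet {x : Fin d → ℝ | cnt u x ≤ k} :=
  (measurable_cnt u) (MeasurableSet.of_discrete (s := {n : ℕ | n ≤ k}))

lemma measset_lt_cnt {d : ℕ} (u : ℝ) (k : ℕ) : MeasurableSet {x : Fin d → ℝ | k < cnt u x} :=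
  (measurable_cnt u) (MeasurableSet.of_discrete (s := {n : ℕ | k < n}))

lemma measset_onecount {d : ℕ} {S T : Set ℝ} (hS : MeasurableSet S) (hT : MeasurableSet T) :
    MeasurableSet {x : Fin d → ℝ | ∃ i, x i ∈ S ∧ ∀ j, j ≠ i → x j ∈ T} := by
  have : {x : Fin d → ℝ | ∃ i, x i ∈ S ∧ ∀ j, j ≠ i → x j ∈ T}
      = ⋃ i, ((fun x : Fin d → ℝ => x i) ⁻¹' S ∩ ⋂ j, ⋂ (_ : j ≠ i), (fun x => x j) ⁻¹' T) := by
    ext x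
    simp [mem_iUnion, mem_iInter]
  rw [this]
  exact MeasurableSet.iUnion fun i =>
    ((measurable_pi_apply i) hS).inter
      (MeasurableSet.iInter fun j => MeasurableSet.iInter fun _ => (measurable_pi_apply j) hT)

/-- measure of `{m₁ > s} ∩ {at most one coordinate ≤ u}` -/
lemma meas_G_inter_oneLe {d : ℕ} {s u : ℝ} (hs0 : 0 ≤ s) (hs1 : s ≤ 1)
    (hu0 : 0 ≤ u) (hu1 : u ≤ 1) :
    unifPi d ({x | ∀ i, s < x i} ∩ {x | cnt u x ≤ 1})
      = ENNReal.ofReal (1 - max s u) ^ d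
        + d * ENNReal.ofReal (u - s) * ENNReal.ofReal (1 - u) ^ (d - 1) := by
  classical
  have hid : {x : Fin d → ℝ | ∀ i, s < x i} ∩ {x | cnt u x ≤ 1}
      = {x | ∀ i, max s u < x i}
        ∪ {x | ∃ i, x i ∈ Ioc s u ∧ ∀ j, j ≠ i → x j ∈ Ioi u} := by
    ext x
    simp only [mem_inter_iff, mem_setOf_eq, mem_union, cnt_le_one_iff, mem_Ioc, mem_Ioi,
      max_lt_iff]
    constructor
    · rintro ⟨hall, hone⟩
      by_cases hex : ∃ i, x i ≤ u
      · obtain ⟨i, hi⟩ := hex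
        refine Or.inr ⟨i, ⟨hall i, hi⟩, fun j hj => ?_⟩
        by_contra hju
        exact hj (hone j i (not_lt.1 hju) hi)
      · push_neg at hex
        exact Or.inl fun i => ⟨hall i, hex i⟩
    · rintro (h | ⟨i, ⟨his, hiu⟩, hrest⟩)
      · exact ⟨fun i => (h i).1, fun a b ha _ => absurd (h a).2 (not_lt.2 ha)⟩
      · constructor
        · intro j
          by_cases hj : j = i
          · exact hj ▸ his
          · exact lt_trans his (lt_of_le_of_lt hiu (hrest j hj))
        · intro a b ha hb
          have hai : a = i := by
            by_contra hai
            exact absurd ha (not_le.2 (hrest a hai))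
          have hbi : b = i := by
            by_contra hbi
            exact absurd hb (not_le.2 (hrest b hbi))
          rw [hai, hbi]
  have hd1 : Disjoint {x : Fin d → ℝ | ∀ i, max s u < x i}
      {x | ∃ i, x i ∈ Ioc s u ∧ ∀ j, j ≠ i → x j ∈ Ioi u} := by
    rw [Set.disjoint_left]
    rintro x hx ⟨i, ⟨_, hiu⟩, _⟩
    exact absurd hiu (not_le.2 (lt_of_le_of_lt (le_max_right s u) (hx i)))
  rw [hid, measure_union hd1 (measset_onecount measurableSet_Ioc measurableSet_Ioi),
    meas_all_gt (le_trans hs0 (le_max_left s u)) (max_le hs1 hu1),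
    onecount _ _ measurableSet_Ioc measurableSet_Ioi
      (fun r hr hr2 => absurd hr.2 (not_le.2 hr2)),
    unif_Ioc hs0 hu1, unif_Ioi hu0 hu1]

/-- the partition identity for the inner measure -/
lemma meas_inner {d : ℕ} {a b : ℝ} (ha : 0 ≤ a) (hab : a ≤ b) (hb : b ≤ 1) :
    unifPi d {y | 0 < cnt a y ∧ 1 < cnt b y}
        + ENNReal.ofReal ((1 - a) ^ d)
        + ENNReal.ofReal (d * a * (1 - b) ^ (d - 1)) = 1 := by
  classical
  have hcompl : {y : Fin d → ℝ | 0 < cnt a y ∧ 1 < cnt b y}ᶜ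
      = {y | ∀ i, a < y i} ∪ {y | ∃ i, y i ∈ Iic a ∧ ∀ j, j ≠ i → y j ∈ Ioi b} := by
    ext y
    constructor
    · intro hy
      simp only [mem_compl_iff, mem_setOf_eq, not_and_or, not_lt] at hy
      rcases hy with h0 | h1
      · left
        intro i
        by_contra hc
        have := (cnt_pos_iff a y).2 ⟨i, not_lt.1 hc⟩
        omega
      · rw [cnt_le_one_iff] at h1
        by_cases hex : ∃ i, y i ≤ a
        · obtain ⟨i, hi⟩ := hex
          right
          refine ⟨i, hi, fun j hj => ?_⟩
          by_contra hj'
          exact hj (h1 j i (not_lt.1 hj') (hi.trans hab))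
        · push_neg at hex
          left
          exact hex
    · intro hy
      simp only [mem_union, mem_setOf_eq, mem_Iic, mem_Ioi] at hy
      rw [mem_compl_iff, mem_setOf_eq, not_and_or]
      rcases hy with h | ⟨i, hia, hrest⟩
      · left
        intro hc
        obtain ⟨j, hj⟩ := (cnt_pos_iff a y).1 hc
        exact absurd (h j) (not_lt.2 hj)
      · right
        rw [not_lt, cnt_le_one_iff]
        intro p q hp hq
        have hpi : p = i := by
          by_contra hc
          exact absurd hp (not_le.2 (hrest p hc))
        have hqi : q = i := by
          by_contra hc
          exact absurd hq (not_le.2 (hrest q hc))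
        rw [hpi, hqi]
  have hm : MeasurableSet {y : Fin d → ℝ | 0 < cnt a y ∧ 1 < cnt b y} := by
    rw [Set.setOf_and]
    exact (measset_lt_cnt a 0).inter (measset_lt_cnt b 1)
  have hd1 : Disjoint {y : Fin d → ℝ | ∀ i, a < y i}
      {y | ∃ i, y i ∈ Iic a ∧ ∀ j, j ≠ i → y j ∈ Ioi b} := by
    rw [Set.disjoint_left]
    rintro y hy ⟨i, hia, _⟩
    exact absurd (hy i) (not_lt.2 hia)
  have key := measure_add_measure_compl (μ := unifPi d) hm
  rw [hcompl, measure_union hd1 (measset_onecount measurableSet_Iic measurableSet_Ioi),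
    meas_all_gt ha (hab.trans hb),
    onecount _ _ measurableSet_Iic measurableSet_Ioi
      (fun r hr hr2 => absurd (le_trans hr hab) (not_le.2 hr2)),
    unif_Iic ha (hab.trans hb), unif_Ioi (ha.trans hab) hb] at key
  have e1 : ENNReal.ofReal (1 - a) ^ d = ENNReal.ofReal ((1 - a) ^ d) :=
    (ENNReal.ofReal_pow (by linarith) d).symm
  have e2 : (d : ℝ≥0∞) * ENNReal.ofReal a * ENNReal.ofReal (1 - b) ^ (d - 1)
      = ENNReal.ofReal (d * a * (1 - b) ^ (d - 1)) := by
    rw [ENNReal.ofReal_mul (by positivity), ENNReal.ofReal_mul (by positivity),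
      ENNReal.ofReal_pow (by linarith), ENNReal.ofReal_natCast]
  rw [e1, e2, ← add_assoc, measure_univ] at key
  exact key


lemma lint_swap {Ω : Type*} [MeasurableSpace Ω] (ν : Measure Ω) [SFinite ν]
    (f : ℝ × Ω → ℝ≥0∞) (hf : Measurable f) :
    ∫⁻ x, (∫⁻ t, f (t, x) ∂unif) ∂ν = ∫⁻ t, (∫⁻ x, f (t, x) ∂ν) ∂unif := by
  rw [← MeasureTheory.lintegral_prod _ hf.aemeasurable,
      ← MeasureTheory.lintegral_prod_symm _ hf.aemeasurable]

lemma indicator_comp {α β : Type*} (E : Set β) (g : β → ℝ≥0∞) (h : α → β) :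
    (fun a => E.indicator g (h a)) = (h ⁻¹' E).indicator (fun a => g (h a)) := by
  funext a
  by_cases hm : h a ∈ E <;> simp [Set.indicator_apply, hm]

lemma lint_ofReal_Ioc {f : ℝ → ℝ} {a b : ℝ} (hab : a ≤ b) (hf : Continuous f)
    (hnn : ∀ t ∈ Ioc a b, 0 ≤ f t) :
    ∫⁻ t in Ioc a b, ENNReal.ofReal (f t) ∂volume = ENNReal.ofReal (∫ t in a..b, f t) := by
  rw [intervalIntegral.integral_of_le hab, ← ofReal_integral_eq_lintegral_ofReal]
  · exact (hf.integrableOn_Icc).mono_set Ioc_subset_Icc_self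
  · exact (ae_restrict_iff' measurableSet_Ioc).2 (Filter.Eventually.of_forall hnn)

lemma lint_Icc_eq_Ioc {f : ℝ → ℝ≥0∞} {a b : ℝ} :
    ∫⁻ t in Icc a b, f t ∂volume = ∫⁻ t in Ioc a b, f t ∂volume := by
  rw [Measure.restrict_congr_set Ioc_ae_eq_Icc.symm]

lemma m1_le_iff {d : ℕ} (h : 0 < d) (x : Fin d → ℝ) (t : ℝ) :
    sortVec x ⟨0, h⟩ ≤ t ↔ 0 < cnt t x := sortVec_le_iff x ⟨0, h⟩ t

lemma m2_le_iff {d : ℕ} (h : 1 < d) (x : Fin d → ℝ) (t : ℝ) :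
    sortVec x ⟨1, h⟩ ≤ t ↔ 1 < cnt t x := sortVec_le_iff x ⟨1, h⟩ t

lemma meas_C1 {d : ℕ} {u : ℝ} (h0 : 0 ≤ u) (h1 : u ≤ 1) :
    unifPi d {x | 0 < cnt u x} = 1 - ENNReal.ofReal (1 - u) ^ d := by
  have hc : {x : Fin d → ℝ | 0 < cnt u x}ᶜ = {x | ∀ i, u < x i} := by
    ext x
    simp only [mem_compl_iff, mem_setOf_eq, cnt_pos_iff, not_exists, not_le]
  have hm : MeasurableSet {x : Fin d → ℝ | 0 < cnt u x} := measset_lt_cnt u 0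
  have key := measure_add_measure_compl (μ := unifPi d) hm
  rw [hc, meas_all_gt h0 h1, measure_univ] at key
  exact (ENNReal.eq_sub_of_add_eq (by simp [ENNReal.pow_ne_top]) key)

/-- representation of a power as an integral against `unif` -/
lemma pow_as_lint {a : ℝ} (ha : 0 ≤ a) (ha1 : a ≤ 1) (k : ℕ) :
    ∫⁻ t in Iic (1 - a), ENNReal.ofReal ((k + 1 : ℝ) * t ^ k) ∂unif
      = ENNReal.ofReal ((1 - a) ^ (k + 1)) := by
  rw [unif, Measure.restrict_restrict measurableSet_Iic]
  have hset : Iic (1 - a) ∩ Icc 0 1 = Icc 0 (1 - a) := by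
    ext t
    simp only [mem_inter_iff, mem_Iic, mem_Icc]
    constructor
    · rintro ⟨h, h2, _⟩; exact ⟨h2, h⟩
    · rintro ⟨h2, h⟩; exact ⟨h, h2, by linarith⟩
  rw [hset, lint_Icc_eq_Ioc, lint_ofReal_Ioc (f := fun t : ℝ => ((k + 1 : ℝ) * t ^ k)) (by linarith)
      (continuous_const.mul (continuous_pow k))
      (fun t ht => by have ht1 := ht.1; positivity)]
  congr 1
  rw [intervalIntegral.integral_const_mul, integral_pow, zero_pow (by omega), sub_zero]
  have hne : ((k : ℝ) + 1) ≠ 0 := by positivity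
  field_simp

lemma ae_cube (d : ℕ) : ∀ᵐ x ∂unifPi d, ∀ i, x i ∈ Icc (0:ℝ) 1 := by
  have hs : {x : Fin d → ℝ | ∀ i, x i ∈ Icc (0:ℝ) 1} = Set.pi univ (fun _ => Icc 0 1) := by
    ext x
    exact ⟨fun h i _ => h i, fun h i => h i (mem_univ i)⟩
  have hm : MeasurableSet {x : Fin d → ℝ | ∀ i, x i ∈ Icc (0:ℝ) 1} := by
    rw [hs]; exact MeasurableSet.univ_pi fun _ => measurableSet_Icc
  have hval : unifPi d {x : Fin d → ℝ | ∀ i, x i ∈ Icc (0:ℝ) 1} = 1 := by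
    rw [prodset _ measurableSet_Icc]
    have : unif (Icc 0 1) = 1 := by simp [unif]
    rw [this, one_pow]
  rw [ae_iff]
  have h2 : {x : Fin d → ℝ | ¬ ∀ i, x i ∈ Icc (0:ℝ) 1}
      = {x : Fin d → ℝ | ∀ i, x i ∈ Icc (0:ℝ) 1}ᶜ := rfl
  rw [h2, measure_compl hm (by simp [hval]), hval, measure_univ, tsub_self]

lemma U1_val (m : ℕ) (m1 : (Fin (m + 2) → ℝ) → ℝ)
    (hm : Measurable m1)
    (hiff : ∀ x t, m1 x ≤ t ↔ 0 < cnt t x)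
    (hmem : ∀ x : Fin (m + 2) → ℝ, (∀ i, x i ∈ Icc (0:ℝ) 1) → m1 x ∈ Icc (0:ℝ) 1) :
    ∫⁻ x, ENNReal.ofReal ((1 - m1 x) ^ (m + 2)) ∂(unifPi (m + 2))
      = ENNReal.ofReal (1 / 2) := by
  have hael := ae_cube (m + 2)
  set E1 : Set (ℝ × (Fin (m + 2) → ℝ)) := {p | m1 p.2 ≤ 1 - p.1} with hE1def
  have hmsnd : Measurable fun p : ℝ × (Fin (m + 2) → ℝ) => m1 p.2 := hm.comp measurable_snd
  have hE1 : MeasurableSet E1 :=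
    measurableSet_le hmsnd (measurable_const.sub measurable_fst)
  set f : ℝ × (Fin (m + 2) → ℝ) → ℝ≥0∞ :=
    E1.indicator (fun p => ENNReal.ofReal ((m + 2 : ℝ) * p.1 ^ (m + 1))) with hfdef
  have hfm : Measurable f :=
    (Measurable.ennreal_ofReal (measurable_const.mul (measurable_fst.pow_const _))).indicator hE1
  have hA : ∀ x : Fin (m + 2) → ℝ, (∀ i, x i ∈ Icc (0:ℝ) 1) →
      ∫⁻ t, f (t, x) ∂unif = ENNReal.ofReal ((1 - m1 x) ^ (m + 2)) := by
    intro x hx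
    have h01 := hmem x hx
    have hcomp : (fun t => f (t, x))
        = ((fun t : ℝ => (t, x)) ⁻¹' E1).indicator
            (fun t => ENNReal.ofReal ((m + 2 : ℝ) * t ^ (m + 1))) :=
      indicator_comp E1 _ (fun t => (t, x))
    have hpre : (fun t : ℝ => (t, x)) ⁻¹' E1 = Iic (1 - m1 x) := by
      ext t
      simp only [hE1def, mem_preimage, mem_setOf_eq, mem_Iic]
      constructor <;> intro h <;> linarith
    rw [hcomp, hpre, lintegral_indicator measurableSet_Iic]
    have hco := pow_as_lint h01.1 h01.2 (m + 1)
    have hc1 : ((m + 1 : ℕ) : ℝ) + 1 = (m + 2 : ℝ) := by push_cast; ring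
    rw [hc1] at hco
    exact hco
  have hB : ∀ t ∈ Icc (0:ℝ) 1,
      ∫⁻ x, f (t, x) ∂(unifPi (m + 2))
        = ENNReal.ofReal ((m + 2 : ℝ) * t ^ (m + 1) * (1 - t ^ (m + 2))) := by
    intro t ht
    have hcomp : (fun x => f (t, x))
        = (Prod.mk t ⁻¹' E1).indicator
            (fun _ => ENNReal.ofReal ((m + 2 : ℝ) * t ^ (m + 1))) :=
      indicator_comp E1 _ (Prod.mk t)
    have hpre : Prod.mk t ⁻¹' E1 = {x | 0 < cnt (1 - t) x} := by
      ext x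
      simp only [hE1def, mem_preimage, mem_setOf_eq, ← hiff]
    rw [hcomp, hpre, lintegral_indicator (measset_lt_cnt _ 0), setLIntegral_const,
      meas_C1 (by linarith [ht.2]) (by linarith [ht.1]),
      show (1:ℝ) - (1 - t) = t by ring, ← ENNReal.ofReal_pow ht.1, ← ENNReal.ofReal_one,
      ← ENNReal.ofReal_sub _ (pow_nonneg ht.1 _),
      ← ENNReal.ofReal_mul (mul_nonneg (by positivity) (pow_nonneg ht.1 _))]
  calc ∫⁻ x, ENNReal.ofReal ((1 - m1 x) ^ (m + 2)) ∂(unifPi (m + 2))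
      = ∫⁻ x, (∫⁻ t, f (t, x) ∂unif) ∂(unifPi (m + 2)) :=
        lintegral_congr_ae (hael.mono fun x hx => (hA x hx).symm)
    _ = ∫⁻ t, (∫⁻ x, f (t, x) ∂(unifPi (m + 2))) ∂unif := lint_swap _ f hfm
    _ = ∫⁻ t in Icc (0:ℝ) 1,
          ENNReal.ofReal ((m + 2 : ℝ) * t ^ (m + 1) * (1 - t ^ (m + 2))) ∂volume := by
        rw [unif]
        exact setLIntegral_congr_fun measurableSet_Icc (fun t ht => hB t ht)
    _ = ENNReal.ofReal (1 / 2) := by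
        rw [lint_Icc_eq_Ioc, lint_ofReal_Ioc (f := fun t : ℝ => (m + 2 : ℝ) * t ^ (m + 1) * (1 - t ^ (m + 2))) zero_le_one
          ((continuous_const.mul (continuous_pow _)).mul
            (continuous_const.sub (continuous_pow _)))
          (fun t ht => mul_nonneg (mul_nonneg (by positivity) (pow_nonneg ht.1.le _)) (by
            have : t ^ (m + 2) ≤ 1 := pow_le_one₀ ht.1.le ht.2
            linarith))]
        congr 1
        have hexp : ∀ t : ℝ, (m + 2 : ℝ) * t ^ (m + 1) * (1 - t ^ (m + 2))
            = (m + 2 : ℝ) * t ^ (m + 1) - (m + 2 : ℝ) * t ^ (2 * m + 3) := by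
          intro t
          rw [show 2 * m + 3 = (m + 1) + (m + 2) from by ring, pow_add]
          ring
        rw [intervalIntegral.integral_congr
            (g := fun t : ℝ => (m + 2 : ℝ) * t ^ (m + 1) - (m + 2 : ℝ) * t ^ (2 * m + 3))
            (fun t _ => hexp t)]
        rw [intervalIntegral.integral_sub (f := fun t : ℝ => (m + 2 : ℝ) * t ^ (m + 1))
            (g := fun t : ℝ => (m + 2 : ℝ) * t ^ (2 * m + 3))
            ((continuous_const.mul (continuous_pow _)).intervalIntegrable _ _)
            ((continuous_const.mul (continuous_pow _)).intervalIntegrable _ _),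
          intervalIntegral.integral_const_mul, intervalIntegral.integral_const_mul,
          integral_pow, integral_pow]
        push_cast
        norm_num
        field_simp
        ring

lemma Z_val (m : ℕ) (m1 m2 : (Fin (m + 2) → ℝ) → ℝ)
    (hm1 : Measurable m1) (hm2 : Measurable m2)
    (hiff1 : ∀ x t, m1 x ≤ t ↔ 0 < cnt t x)
    (hiff2 : ∀ x t, m2 x ≤ t ↔ 1 < cnt t x)
    (hmem2 : ∀ x : Fin (m + 2) → ℝ, (∀ i, x i ∈ Icc (0:ℝ) 1) → m2 x ∈ Icc (0:ℝ) 1)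
    (h12 : ∀ x, m1 x ≤ m2 x) {s : ℝ} (hs : s ∈ Icc (0:ℝ) 1) :
    ∫⁻ x in {x | s < m1 x}, ENNReal.ofReal ((1 - m2 x) ^ (m + 1)) ∂(unifPi (m + 2))
      = ENNReal.ofReal ((1 - s) ^ (2 * m + 3) * (((m:ℝ) + 2) / (2 * (2 * (m:ℝ) + 3)))) := by
  set c : ℝ := 1 - s with hcdef
  have hc0 : (0:ℝ) ≤ c := by rw [hcdef]; linarith [hs.2]
  have hc1 : c ≤ 1 := by rw [hcdef]; linarith [hs.1]
  set G : Set (Fin (m+2) → ℝ) := {x | s < m1 x} with hGdef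
  have hGm : MeasurableSet G := measurableSet_lt measurable_const hm1
  have hGall : G = {x | ∀ i, s < x i} := by
    ext x
    simp only [hGdef, mem_setOf_eq]
    constructor
    · intro h i
      by_contra hc'
      exact absurd ((hiff1 x s).2 ((cnt_pos_iff s x).2 ⟨i, not_lt.1 hc'⟩)) (not_le.2 h)
    · intro h
      by_contra hcon
      rw [not_lt] at hcon
      obtain ⟨i, hi⟩ := (cnt_pos_iff s x).1 ((hiff1 x s).1 hcon)
      exact absurd (h i) (not_lt.2 hi)
  have hμG : unifPi (m+2) G = ENNReal.ofReal (c ^ (m+2)) := by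
    rw [hGall, meas_all_gt hs.1 hs.2, ← ENNReal.ofReal_pow (by linarith [hs.2] : (0:ℝ) ≤ 1 - s)]
  have haν : ∀ᵐ x ∂(unifPi (m+2)).restrict G, ∀ i, x i ∈ Icc (0:ℝ) 1 :=
    ae_restrict_of_ae (ae_cube _)
  set E3 : Set (ℝ × (Fin (m+2) → ℝ)) := {p | m2 p.2 ≤ 1 - p.1} with hE3def
  have hm2snd : Measurable fun p : ℝ × (Fin (m+2) → ℝ) => m2 p.2 := hm2.comp measurable_snd
  have hE3 : MeasurableSet E3 := measurableSet_le hm2snd (measurable_const.sub measurable_fst)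
  set f3 : ℝ × (Fin (m+2) → ℝ) → ℝ≥0∞ :=
    E3.indicator (fun p => ENNReal.ofReal (((m:ℝ) + 1) * p.1 ^ m)) with hf3def
  have hf3m : Measurable f3 :=
    (Measurable.ennreal_ofReal (measurable_const.mul (measurable_fst.pow_const _))).indicator hE3
  have hA3 : ∀ x : Fin (m+2) → ℝ, (∀ i, x i ∈ Icc (0:ℝ) 1) →
      ∫⁻ t, f3 (t, x) ∂unif = ENNReal.ofReal ((1 - m2 x) ^ (m+1)) := by
    intro x hx
    have h01 := hmem2 x hx
    have hcomp : (fun t => f3 (t, x))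
        = ((fun t : ℝ => (t, x)) ⁻¹' E3).indicator
            (fun t => ENNReal.ofReal (((m:ℝ) + 1) * t ^ m)) :=
      indicator_comp E3 _ (fun t => (t, x))
    have hpre : (fun t : ℝ => (t, x)) ⁻¹' E3 = Iic (1 - m2 x) := by
      ext t
      simp only [hE3def, mem_preimage, mem_setOf_eq, mem_Iic]
      constructor <;> intro h <;> linarith
    rw [hcomp, hpre, lintegral_indicator measurableSet_Iic]
    exact pow_as_lint h01.1 h01.2 m
  have hAt : ∀ t : ℝ, Prod.mk t ⁻¹' E3 = {x | 1 < cnt (1 - t) x} := by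
    intro t; ext x; simp only [hE3def, mem_preimage, mem_setOf_eq, ← hiff2]
  have hAtm : ∀ t : ℝ, MeasurableSet {x : Fin (m+2) → ℝ | 1 < cnt (1-t) x} :=
    fun t => measset_lt_cnt _ 1
  -- the nonnegative auxiliary integrand
  set ψ : ℝ → ℝ :=
    fun t => ((m:ℝ) + 1) * t ^ m * (t ^ (m+2) + ((m:ℝ) + 2) * (c - t) * t ^ (m+1)) with hψdef
  have hψcont : Continuous ψ := by
    apply Continuous.mul
    · exact continuous_const.mul (continuous_pow m)
    · exact (continuous_pow _).add
        ((continuous_const.mul (continuous_const.sub continuous_id)).mul (continuous_pow _))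
  have hcalc1 : ∫⁻ x in G, ENNReal.ofReal ((1 - m2 x) ^ (m+1)) ∂(unifPi (m+2))
      = ∫⁻ t in Icc (0:ℝ) 1, ENNReal.ofReal (((m:ℝ) + 1) * t ^ m)
          * unifPi (m+2) ({x | 1 < cnt (1-t) x} ∩ G) ∂volume := by
    calc ∫⁻ x in G, ENNReal.ofReal ((1 - m2 x) ^ (m+1)) ∂(unifPi (m+2))
        = ∫⁻ x in G, (∫⁻ t, f3 (t, x) ∂unif) ∂(unifPi (m+2)) :=
          lintegral_congr_ae (haν.mono fun x hx => (hA3 x hx).symm)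
      _ = ∫⁻ t, (∫⁻ x in G, f3 (t, x) ∂(unifPi (m+2))) ∂unif :=
          lint_swap ((unifPi (m+2)).restrict G) f3 hf3m
      _ = ∫⁻ t in Icc (0:ℝ) 1, ENNReal.ofReal (((m:ℝ) + 1) * t ^ m)
            * unifPi (m+2) ({x | 1 < cnt (1-t) x} ∩ G) ∂volume := by
          rw [unif]
          refine setLIntegral_congr_fun measurableSet_Icc
            (fun t ht => ?_)
          rw [show (fun x => f3 (t, x))
              = (Prod.mk t ⁻¹' E3).indicator (fun _ => ENNReal.ofReal (((m:ℝ) + 1) * t ^ m))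
              from indicator_comp E3 _ (Prod.mk t)]
          rw [hAt, lintegral_indicator (hAtm t), setLIntegral_const,
            Measure.restrict_apply (hAtm t)]
  -- split the t-integral at c
  have hsplit : ∫⁻ t in Icc (0:ℝ) 1, ENNReal.ofReal (((m:ℝ) + 1) * t ^ m)
          * unifPi (m+2) ({x | 1 < cnt (1-t) x} ∩ G) ∂volume
      = (∫⁻ t in Icc (0:ℝ) c, ENNReal.ofReal (((m:ℝ) + 1) * t ^ m)
          * unifPi (m+2) ({x | 1 < cnt (1-t) x} ∩ G) ∂volume)
        + (∫⁻ t in Ioc c 1, ENNReal.ofReal (((m:ℝ) + 1) * t ^ m)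
          * unifPi (m+2) ({x | 1 < cnt (1-t) x} ∩ G) ∂volume) := by
    rw [← lintegral_union measurableSet_Ioc
      (by rw [Set.disjoint_left]; rintro t ⟨_, h1⟩ ⟨h2, _⟩; exact absurd h1 (not_le.2 h2)),
      Icc_union_Ioc_eq_Icc hc0 hc1]
  -- piece 2 vanishes
  have hp2 : ∫⁻ t in Ioc c 1, ENNReal.ofReal (((m:ℝ) + 1) * t ^ m)
      * unifPi (m+2) ({x | 1 < cnt (1-t) x} ∩ G) ∂volume = 0 := by
    rw [setLIntegral_congr_fun measurableSet_Ioc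
      (fun t ht => ?_), lintegral_zero]
    have hempty : {x : Fin (m+2) → ℝ | 1 < cnt (1-t) x} ∩ G = ∅ := by
      ext x
      simp only [mem_inter_iff, mem_setOf_eq, mem_empty_iff_false, iff_false, not_and, hGdef]
      intro hx
      rw [← hiff2] at hx
      have h1 : m1 x ≤ m2 x := h12 x
      have h2 : 1 - t ≤ s := by rw [hcdef] at ht; linarith [ht.1]
      exact not_lt.2 (by linarith)
    rw [hempty, measure_empty, mul_zero]
  -- pointwise identity on piece 1
  have hp1 : ∀ t ∈ Icc (0:ℝ) c,
      ENNReal.ofReal (((m:ℝ) + 1) * t ^ m) * unifPi (m+2) ({x | 1 < cnt (1-t) x} ∩ G)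
        + ENNReal.ofReal (ψ t)
      = ENNReal.ofReal (((m:ℝ) + 1) * t ^ m * c ^ (m+2)) := by
    intro t ht
    have ht0 : (0:ℝ) ≤ t := ht.1
    have htc : t ≤ c := ht.2
    have hu0 : (0:ℝ) ≤ 1 - t := by linarith
    have hu1 : 1 - t ≤ 1 := by linarith
    have hdiff : G \ {x : Fin (m+2) → ℝ | 1 < cnt (1-t) x}
        = {x | ∀ i, s < x i} ∩ {x | cnt (1-t) x ≤ 1} := by
      rw [hGall]
      ext x
      simp only [mem_diff, mem_setOf_eq, mem_inter_iff, not_lt]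
    have hsum := measure_inter_add_diff (μ := unifPi (m+2)) G (hAtm t)
    rw [hdiff, inter_comm G, hμG,
      meas_G_inter_oneLe hs.1 hs.2 hu0 hu1,
      max_eq_right (by rw [hcdef] at htc; linarith),
      show (1:ℝ) - (1 - t) = t by ring,
      show m + 2 - 1 = m + 1 from rfl] at hsum
    -- hsum : μ(A∩G) + (ofReal t ^ (m+2) + (m+2) * ofReal(1-t-s) * ofReal t ^ (m+1)) = ofReal (c^(m+2))
    have hofr : ENNReal.ofReal t ^ (m+2)
          + (((m:ℕ) + 2 : ℕ) : ℝ≥0∞) * ENNReal.ofReal (1 - t - s) * ENNReal.ofReal t ^ (m+1)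
        = ENNReal.ofReal (t ^ (m+2) + ((m:ℝ) + 2) * (c - t) * t ^ (m+1)) := by
      rw [← ENNReal.ofReal_pow ht0, ← ENNReal.ofReal_pow ht0,
        ← ENNReal.ofReal_natCast (m+2),
        ← ENNReal.ofReal_mul (by positivity),
        ← ENNReal.ofReal_mul (by
          have : (0:ℝ) ≤ 1 - t - s := by rw [hcdef] at htc; linarith
          positivity),
        ← ENNReal.ofReal_add (by positivity) (by
          have h1 : (0:ℝ) ≤ 1 - t - s := by rw [hcdef] at htc; linarith
          positivity)]
      congr 2
      push_cast
      rw [hcdef]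
      ring
    rw [hofr] at hsum
    -- multiply by the weight
    have := congrArg (fun z => ENNReal.ofReal (((m:ℝ) + 1) * t ^ m) * z) hsum
    simp only [mul_add] at this
    rw [← ENNReal.ofReal_mul (by positivity), ← ENNReal.ofReal_mul (by positivity)] at this
    rw [hψdef]
    exact this
  -- evaluate the two explicit integrals
  have hψnn : ∀ t ∈ Icc (0:ℝ) c, 0 ≤ ψ t := by
    intro t ht
    have h1 : (0:ℝ) ≤ c - t := by linarith [ht.2]
    have h0 : (0:ℝ) ≤ t := ht.1
    rw [hψdef]
    positivity
  have hIψ : ∫⁻ t in Icc (0:ℝ) c, ENNReal.ofReal (ψ t) ∂volume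
      = ENNReal.ofReal (∫ t in (0:ℝ)..c, ψ t) := by
    rw [lint_Icc_eq_Ioc]
    exact lint_ofReal_Ioc hc0 hψcont (fun t ht => hψnn t ⟨ht.1.le, ht.2⟩)
  have hIφ : ∫⁻ t in Icc (0:ℝ) c, ENNReal.ofReal (((m:ℝ) + 1) * t ^ m * c ^ (m+2)) ∂volume
      = ENNReal.ofReal (∫ t in (0:ℝ)..c, ((m:ℝ) + 1) * t ^ m * c ^ (m+2)) := by
    rw [lint_Icc_eq_Ioc]
    exact lint_ofReal_Ioc hc0
      ((continuous_const.mul (continuous_pow m)).mul continuous_const)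
      (fun t ht => by
        have h0 : (0:ℝ) ≤ t := ht.1.le
        positivity)
  have hΨnn : 0 ≤ ∫ t in (0:ℝ)..c, ψ t :=
    intervalIntegral.integral_nonneg hc0 (fun t ht => hψnn t ht)
  -- real values
  have hΦval : ∫ t in (0:ℝ)..c, ((m:ℝ) + 1) * t ^ m * c ^ (m+2) = c ^ (2*m+3) := by
    rw [intervalIntegral.integral_congr
        (g := fun t : ℝ => (((m:ℝ) + 1) * c ^ (m+2)) * t ^ m) (fun t _ => by ring),
      intervalIntegral.integral_const_mul, integral_pow, zero_pow (by omega), sub_zero]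
    have hne : ((m:ℝ) + 1) ≠ 0 := by positivity
    field_simp
    ring
  have hΨval : ∫ t in (0:ℝ)..c, ψ t
      = (((m:ℝ)+1) - ((m:ℝ)+1)*((m:ℝ)+2)) * (c^(2*m+3) / (2*(m:ℝ)+3))
        + ((m:ℝ)+1)*((m:ℝ)+2)*c * (c^(2*m+2) / (2*(m:ℝ)+2)) := by
    rw [intervalIntegral.integral_congr
        (g := fun t : ℝ => (((m:ℝ)+1) - ((m:ℝ)+1)*((m:ℝ)+2)) * t^(2*m+2)
          + (((m:ℝ)+1)*((m:ℝ)+2)*c) * t^(2*m+1))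
        (fun t _ => by simp only [hψdef]; ring)]
    rw [intervalIntegral.integral_add
        (f := fun t : ℝ => (((m:ℝ)+1) - ((m:ℝ)+1)*((m:ℝ)+2)) * t^(2*m+2))
        (g := fun t : ℝ => (((m:ℝ)+1)*((m:ℝ)+2)*c) * t^(2*m+1))
        ((continuous_const.mul (continuous_pow _)).intervalIntegrable _ _)
        ((continuous_const.mul (continuous_pow _)).intervalIntegrable _ _),
      intervalIntegral.integral_const_mul, intervalIntegral.integral_const_mul,
      integral_pow, integral_pow, zero_pow (by omega), zero_pow (by omega)]
    push_cast
    ring_nf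
  -- assemble
  have hadd := setLIntegral_congr_fun (μ := volume) measurableSet_Icc
    (fun t ht => hp1 t ht)
  rw [lintegral_add_right _ (hψcont.measurable.ennreal_ofReal), hIψ, hIφ] at hadd
  have hP1 : ∫⁻ t in Icc (0:ℝ) c, ENNReal.ofReal (((m:ℝ) + 1) * t ^ m)
      * unifPi (m+2) ({x | 1 < cnt (1-t) x} ∩ G) ∂volume
      = ENNReal.ofReal ((∫ t in (0:ℝ)..c, ((m:ℝ) + 1) * t ^ m * c ^ (m+2))
          - ∫ t in (0:ℝ)..c, ψ t) := by
    rw [ENNReal.ofReal_sub _ hΨnn]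
    exact ENNReal.eq_sub_of_add_eq ENNReal.ofReal_ne_top hadd
  rw [hcalc1, hsplit, hp2, add_zero, hP1, hΦval, hΨval]
  congr 1
  have hne1 : (2*(m:ℝ)+3) ≠ 0 := by positivity
  have hne2 : (2*(m:ℝ)+2) ≠ 0 := by positivity
  field_simp
  ring

lemma V_val (m : ℕ) (m1 m2 : (Fin (m + 2) → ℝ) → ℝ)
    (hm1 : Measurable m1) (hm2 : Measurable m2)
    (hiff1 : ∀ x t, m1 x ≤ t ↔ 0 < cnt t x)
    (hiff2 : ∀ x t, m2 x ≤ t ↔ 1 < cnt t x)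
    (hmem1 : ∀ x : Fin (m + 2) → ℝ, (∀ i, x i ∈ Icc (0:ℝ) 1) → m1 x ∈ Icc (0:ℝ) 1)
    (hmem2 : ∀ x : Fin (m + 2) → ℝ, (∀ i, x i ∈ Icc (0:ℝ) 1) → m2 x ∈ Icc (0:ℝ) 1)
    (h12 : ∀ x, m1 x ≤ m2 x) :
    ∫⁻ x, ENNReal.ofReal (m1 x * (1 - m2 x) ^ (m + 1)) ∂(unifPi (m + 2))
      = ENNReal.ofReal (1 / (4 * (2 * (m:ℝ) + 3))) := by
  have hael := ae_cube (m + 2)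
  set E2 : Set (ℝ × (Fin (m+2) → ℝ)) := {p | p.1 < m1 p.2} with hE2def
  have hm1snd : Measurable fun p : ℝ × (Fin (m+2) → ℝ) => m1 p.2 := hm1.comp measurable_snd
  have hm2snd : Measurable fun p : ℝ × (Fin (m+2) → ℝ) => m2 p.2 := hm2.comp measurable_snd
  have hE2 : MeasurableSet E2 := measurableSet_lt measurable_fst hm1snd
  set f2 : ℝ × (Fin (m+2) → ℝ) → ℝ≥0∞ :=
    E2.indicator (fun p => ENNReal.ofReal ((1 - m2 p.2) ^ (m + 1))) with hf2def
  have hf2m : Measurable f2 :=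
    (Measurable.ennreal_ofReal ((measurable_const.sub hm2snd).pow_const _)).indicator hE2
  have hA2 : ∀ x : Fin (m+2) → ℝ, (∀ i, x i ∈ Icc (0:ℝ) 1) →
      ∫⁻ s, f2 (s, x) ∂unif = ENNReal.ofReal (m1 x * (1 - m2 x) ^ (m + 1)) := by
    intro x hx
    have h1 := hmem1 x hx
    have h2 := hmem2 x hx
    have hcomp : (fun s => f2 (s, x))
        = ((fun s : ℝ => (s, x)) ⁻¹' E2).indicator
            (fun s => ENNReal.ofReal ((1 - m2 x) ^ (m + 1))) :=
      indicator_comp E2 _ (fun s => (s, x))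
    have hpre : (fun s : ℝ => (s, x)) ⁻¹' E2 = Iio (m1 x) := by
      ext s
      simp only [hE2def, mem_preimage, mem_setOf_eq, mem_Iio]
    rw [hcomp, hpre, lintegral_indicator measurableSet_Iio, setLIntegral_const,
      unif_Iio h1.1 h1.2, ← ENNReal.ofReal_mul (by
        have : (0:ℝ) ≤ 1 - m2 x := by linarith [h2.2]
        positivity)]
    rw [mul_comm]
  calc ∫⁻ x, ENNReal.ofReal (m1 x * (1 - m2 x) ^ (m + 1)) ∂(unifPi (m+2))
      = ∫⁻ x, (∫⁻ s, f2 (s, x) ∂unif) ∂(unifPi (m+2)) :=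
        lintegral_congr_ae (hael.mono fun x hx => (hA2 x hx).symm)
    _ = ∫⁻ s, (∫⁻ x, f2 (s, x) ∂(unifPi (m+2))) ∂unif := lint_swap _ f2 hf2m
    _ = ∫⁻ s in Icc (0:ℝ) 1,
          ENNReal.ofReal ((1 - s) ^ (2*m+3) * (((m:ℝ) + 2) / (2 * (2 * (m:ℝ) + 3)))) ∂volume := by
        rw [unif]
        refine setLIntegral_congr_fun measurableSet_Icc
          (fun s hsm => ?_)
        rw [show (fun x => f2 (s, x))
            = (Prod.mk s ⁻¹' E2).indicator (fun x => ENNReal.ofReal ((1 - m2 x) ^ (m + 1)))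
            from indicator_comp E2 _ (Prod.mk s)]
        have hpre : Prod.mk s ⁻¹' E2 = {x | s < m1 x} := rfl
        rw [hpre, lintegral_indicator (measurableSet_lt measurable_const hm1)]
        exact Z_val m m1 m2 hm1 hm2 hiff1 hiff2 hmem2 h12 hsm
    _ = ENNReal.ofReal (1 / (4 * (2 * (m:ℝ) + 3))) := by
        rw [lint_Icc_eq_Ioc, lint_ofReal_Ioc
          (f := fun s : ℝ => (1 - s) ^ (2*m+3) * (((m:ℝ) + 2) / (2 * (2 * (m:ℝ) + 3))))
          zero_le_one
          (by fun_prop)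
          (fun s hsm => by
            have h1 : (0:ℝ) ≤ 1 - s := by linarith [hsm.2]
            positivity)]
        congr 1
        rw [intervalIntegral.integral_congr
          (g := fun s : ℝ => (((m:ℝ) + 2) / (2 * (2 * (m:ℝ) + 3))) * (1 - s) ^ (2*m+3))
          (fun s _ => by ring)]
        rw [intervalIntegral.integral_const_mul,
          intervalIntegral.integral_comp_sub_left (fun t : ℝ => t ^ (2*m+3)) 1,
          show (1:ℝ) - 1 = 0 by norm_num, show (1:ℝ) - 0 = 1 by norm_num,
          integral_pow, one_pow, zero_pow (by omega), sub_zero]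
        push_cast
        have hne1 : (2*(m:ℝ)+3) ≠ 0 := by positivity
        have hne2 : (2*(m:ℝ)+4) ≠ 0 := by positivity
        field_simp
        ring

theorem stmt18 (d : ℕ) (hd : 2 ≤ d) :
    4 * (∫ x, ((unifPi d) {y | sortVec y ⟨0, by omega⟩ ≤ sortVec x ⟨0, by omega⟩ ∧
                  sortVec y ⟨1, by omega⟩ ≤ sortVec x ⟨1, by omega⟩}).toReal
          ∂(unifPi d)) - 1
      = ((d : ℝ) - 1) / (2 * d - 1) := by
  obtain ⟨m, rfl⟩ : ∃ m, d = m + 2 := ⟨d - 2, by omega⟩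
  have h0 : (0:ℕ) < m + 2 := by omega
  have h1 : (1:ℕ) < m + 2 := by omega
  set μ := unifPi (m + 2) with hμdef
  set m1 : (Fin (m+2) → ℝ) → ℝ := fun x => sortVec x ⟨0, h0⟩ with hm1def
  set m2 : (Fin (m+2) → ℝ) → ℝ := fun x => sortVec x ⟨1, h1⟩ with hm2def
  have hm1m : Measurable m1 := measurable_sortVec _
  have hm2m : Measurable m2 := measurable_sortVec _
  have hiff1 : ∀ x t, m1 x ≤ t ↔ 0 < cnt t x := fun x t => m1_le_iff h0 x t
  have hiff2 : ∀ x t, m2 x ≤ t ↔ 1 < cnt t x := fun x t => m2_le_iff h1 x t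
  have hmem1 : ∀ x : Fin (m+2) → ℝ, (∀ i, x i ∈ Icc (0:ℝ) 1) → m1 x ∈ Icc (0:ℝ) 1 :=
    fun x hx => sortVec_mem hx _
  have hmem2 : ∀ x : Fin (m+2) → ℝ, (∀ i, x i ∈ Icc (0:ℝ) 1) → m2 x ∈ Icc (0:ℝ) 1 :=
    fun x hx => sortVec_mem hx _
  have h12 : ∀ x, m1 x ≤ m2 x := fun x => sortVec_mono x (Fin.mk_le_mk.2 (by omega))
  set EE : Set ((Fin (m+2) → ℝ) × (Fin (m+2) → ℝ)) :=
    {p | m1 p.2 ≤ m1 p.1 ∧ m2 p.2 ≤ m2 p.1} with hEEdef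
  have hEE : MeasurableSet EE :=
    (measurableSet_le (hm1m.comp measurable_snd) (hm1m.comp measurable_fst)).inter
      (measurableSet_le (hm2m.comp measurable_snd) (hm2m.comp measurable_fst))
  set F : (Fin (m+2) → ℝ) → ℝ≥0∞ := fun x => μ (Prod.mk x ⁻¹' EE) with hFdef
  have hFm : Measurable F := measurable_measure_prodMk_left hEE
  have hgoal1 : (∫ x, ((unifPi (m+2)) {y | sortVec y ⟨0, by omega⟩ ≤ sortVec x ⟨0, by omega⟩ ∧
                  sortVec y ⟨1, by omega⟩ ≤ sortVec x ⟨1, by omega⟩}).toReal ∂(unifPi (m+2)))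
      = ∫ x, (F x).toReal ∂μ := rfl
  rw [hgoal1, integral_toReal hFm.aemeasurable
    (Filter.Eventually.of_forall fun x => measure_lt_top _ _)]
  -- the pointwise partition identity
  have hpt : ∀ᵐ x ∂μ, F x + ENNReal.ofReal ((1 - m1 x) ^ (m+2))
      + ENNReal.ofReal (((m:ℝ)+2) * m1 x * (1 - m2 x) ^ (m+1)) = 1 := by
    refine (ae_cube (m+2)).mono fun x hx => ?_
    have h1x := hmem1 x hx
    have h2x := hmem2 x hx
    have hseteq : Prod.mk x ⁻¹' EE = {y | 0 < cnt (m1 x) y ∧ 1 < cnt (m2 x) y} := by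
      ext y
      simp only [hEEdef, mem_preimage, mem_setOf_eq, hiff1, hiff2]
    have := meas_inner (d := m+2) h1x.1 (h12 x) h2x.2
    rw [show m + 2 - 1 = m + 1 from rfl] at this
    simp only [hFdef]
    rw [hseteq]
    convert this using 4
    push_cast
    ring
  -- integrate the identity
  have heq : (∫⁻ x, F x ∂μ) + ENNReal.ofReal (1/2)
      + ENNReal.ofReal (((m:ℝ)+2) * (1 / (4 * (2 * (m:ℝ) + 3)))) = 1 := by
    have hsum : ∫⁻ x, (F x + ENNReal.ofReal ((1 - m1 x) ^ (m+2))
        + ENNReal.ofReal (((m:ℝ)+2) * m1 x * (1 - m2 x) ^ (m+1))) ∂μ = 1 := by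
      rw [lintegral_congr_ae hpt, lintegral_one, measure_univ]
    rw [lintegral_add_right _
        (g := fun x => ENNReal.ofReal (((m:ℝ)+2) * m1 x * (1 - m2 x) ^ (m+1))) (Measurable.ennreal_ofReal
        ((measurable_const.mul hm1m).mul ((measurable_const.sub hm2m).pow_const _))),
      lintegral_add_right _ (g := fun x => ENNReal.ofReal ((1 - m1 x) ^ (m+2))) (Measurable.ennreal_ofReal
        ((measurable_const.sub hm1m).pow_const _))] at hsum
    rw [U1_val m m1 hm1m hiff1 hmem1] at hsum
    have hD : ∫⁻ x, ENNReal.ofReal (((m:ℝ)+2) * m1 x * (1 - m2 x) ^ (m+1)) ∂μ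
        = ENNReal.ofReal (((m:ℝ)+2) * (1 / (4 * (2 * (m:ℝ) + 3)))) := by
      have hrw : ∀ x, ENNReal.ofReal (((m:ℝ)+2) * m1 x * (1 - m2 x) ^ (m+1))
          = ENNReal.ofReal ((m:ℝ)+2) * ENNReal.ofReal (m1 x * (1 - m2 x) ^ (m+1)) := by
        intro x
        rw [mul_assoc, ENNReal.ofReal_mul (by positivity)]
      rw [lintegral_congr fun x => hrw x, lintegral_const_mul _ (f := fun x => ENNReal.ofReal (m1 x * (1 - m2 x) ^ (m+1))) (Measurable.ennreal_ofReal
        (hm1m.mul ((measurable_const.sub hm2m).pow_const _))),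
        V_val m m1 m2 hm1m hm2m hiff1 hiff2 hmem1 hmem2 h12,
        ← ENNReal.ofReal_mul (by positivity)]
    rw [hD] at hsum
    exact hsum
  -- extract the real value
  have hfin1 : ENNReal.ofReal (1/2) ≠ ⊤ := ENNReal.ofReal_ne_top
  have hfin2 : ENNReal.ofReal (((m:ℝ)+2) * (1 / (4 * (2 * (m:ℝ) + 3)))) ≠ ⊤ :=
    ENNReal.ofReal_ne_top
  have hIfin : (∫⁻ x, F x ∂μ) ≠ ⊤ := by
    intro hI
    rw [hI] at heq
    simp at heq
  have htr := congrArg ENNReal.toReal heq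
  rw [ENNReal.toReal_add (by rw [ENNReal.add_ne_top]; exact ⟨hIfin, hfin1⟩) hfin2,
    ENNReal.toReal_add hIfin hfin1, ENNReal.toReal_one,
    ENNReal.toReal_ofReal (by norm_num),
    ENNReal.toReal_ofReal (by positivity)] at htr
  have hne : (2 * (m:ℝ) + 3) ≠ 0 := by positivity
  have hI : (∫⁻ x, F x ∂μ).toReal
      = 1 - 1/2 - ((m:ℝ)+2) * (1 / (4 * (2 * (m:ℝ) + 3))) := by linarith
  rw [hI]
  push_cast
  rw [show 2 * ((m:ℝ) + 2) - 1 = 2 * (m:ℝ) + 3 from by ring, eq_div_iff hne]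
  field_simp
  ring
end
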